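/- arXiv:1508.06199 — 2 statements merged into one kernel-verified Lean document; each statement's English description precedes it below -/
import Mathlib

section
/- Assume m₁ = 1 and m₂ = 0 (so that m₁+m₂ = 1 and ρ = 1/2). There exists a constant C > 0 such that for every λ ∈ ℂ with Im λ > 0 and every t ∈ (0, 1/2], |b_λ(t)| ≤ C log(1/t). -/
open Complex MeasureTheory Set

noncomputable section

/-- Gauss hypergeometric function ₂F₁ as a power series sum. -/
def hyp (a b c x : ℂ) : ℂ :=
  ∑' n : ℕ, (ascPochhammer ℂ n).eval a * (ascPochhammer ℂ n).eval b /
    ((ascPochhammer ℂ n).eval c * (n.factorial : ℂ)) * x ^ n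

/-- ρ = (m₁ + 2 m₂)/2 -/
def rho (m₁ m₂ : ℕ) : ℝ := ((m₁ : ℝ) + 2 * m₂) / 2

/-- Δ(t) = (2 sinh t)^(m₁+m₂) (2 cosh t)^(m₂) -/
def Del (m₁ m₂ : ℕ) (t : ℝ) : ℝ :=
  (2 * Real.sinh t) ^ (m₁ + m₂) * (2 * Real.cosh t) ^ m₂

/-- The solution Φ_λ. -/
def Phi (m₁ m₂ : ℕ) (l : ℂ) (t : ℝ) : ℂ :=
  ((2 * Real.cosh t : ℝ) : ℂ) ^ (Complex.I * l - (rho m₁ m₂ : ℂ)) *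
    hyp (((rho m₁ m₂ : ℂ) - Complex.I * l) / 2) (((m₁ : ℂ) + 2) / 4 - Complex.I * l / 2)
      (1 - Complex.I * l) ((((Real.cosh t) ^ 2 : ℝ) : ℂ))⁻¹

/-- The function b_λ. -/
def bfun (m₁ m₂ : ℕ) (l : ℂ) (t : ℝ) : ℂ :=
  (2 : ℂ) ^ (-(rho m₁ m₂ : ℂ) - 1 - Complex.I * l) *
    (Complex.Gamma (((rho m₁ m₂ : ℂ) - Complex.I * l) / 2) *
      Complex.Gamma (((m₁ : ℂ) + 2) / 4 - Complex.I * l / 2) /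
      (Complex.Gamma (((m₁ : ℂ) + (m₂ : ℂ) + 1) / 2) * Complex.Gamma (1 - Complex.I * l))) *
    Phi m₁ m₂ l t

namespace BK

/-- coefficient of the binomial series -/
def pc (w : ℂ) (n : ℕ) : ℂ := (ascPochhammer ℂ n).eval w / n.factorial

lemma pc_zero (w : ℂ) : pc w 0 = 1 := by simp [pc]

lemma pc_succ (w : ℂ) (n : ℕ) : pc w (n+1) * ((n:ℂ)+1) = pc w n * (w + n) := by
  have h1 : ((n+1).factorial : ℂ) = (n.factorial : ℂ) * ((n:ℂ)+1) := by
    push_cast [Nat.factorial_succ]; ring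
  have h2 : ((n:ℂ)+1) ≠ 0 := by
    exact_mod_cast Nat.cast_add_one_ne_zero (R := ℂ) n
  have h3 : ((n.factorial : ℂ)) ≠ 0 := Nat.cast_ne_zero.mpr n.factorial_ne_zero
  simp only [pc, ascPochhammer_succ_eval, h1]
  field_simp

lemma abs_pc_succ (w : ℂ) (n : ℕ) :
    ‖pc w (n+1)‖ * ((n:ℝ)+1) = ‖pc w n‖ * ‖w + n‖ := by
  have := congrArg norm (pc_succ w n)
  rw [norm_mul, norm_mul] at this
  have hn1 : ‖((n:ℂ)+1)‖ = (n:ℝ)+1 := by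
    rw [show ((n:ℂ)+1) = ((n+1:ℕ):ℂ) by push_cast; ring, Complex.norm_natCast]
    push_cast; ring
  rw [hn1] at this
  exact this

lemma summable_M (w : ℂ) {c : ℝ} (h0 : 0 ≤ c) (h1 : c < 1) :
    Summable (fun n : ℕ => ‖pc w n‖ * ((n:ℝ)+1) * c ^ n) := by
  set r : ℝ := (1+c)/2 with hr
  have hr1 : r < 1 := by rw [hr]; linarith
  have hrc : c < r := by rw [hr]; linarith
  have hr0 : 0 < r - c := by linarith
  obtain ⟨N, hN⟩ := exists_nat_ge (‖w‖ * c / (r - c))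
  apply summable_of_ratio_norm_eventually_le hr1
  filter_upwards [Filter.eventually_ge_atTop N] with n hn
  have hn' : (N:ℝ) ≤ n := Nat.cast_le.mpr hn
  have hwc : ‖w‖ * c ≤ (r - c) * n := by
    rw [div_le_iff₀ hr0] at hN
    nlinarith
  have habs : ‖w + (n:ℂ)‖ ≤ ‖w‖ + n := by
    simpa using norm_add_le w (n:ℂ)
  have key : ‖w + (n:ℂ)‖ * (((n:ℝ)+2) * c) ≤ r * ((n:ℝ)+1)^2 := by
    have h4 : ‖w + (n:ℂ)‖ * (((n:ℝ)+2) * c) ≤ (‖w‖ + n) * (((n:ℝ)+2) * c) := by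
      apply mul_le_mul_of_nonneg_right habs
      positivity
    nlinarith [norm_nonneg w]
  have hpos : (0:ℝ) < (n:ℝ) + 1 := by positivity
  rw [Real.norm_of_nonneg (by positivity), Real.norm_of_nonneg (by positivity)]
  rw [← mul_le_mul_iff_left₀ hpos]
  push_cast
  have lhs_eq : ‖pc w (n+1)‖ * ((n:ℝ)+1+1) * c ^ (n+1) * ((n:ℝ)+1)
      = (‖pc w n‖ * c ^ n) * (‖w + (n:ℂ)‖ * (((n:ℝ)+2) * c)) := by
    have h := abs_pc_succ w n
    rw [pow_succ]
    linear_combination (((n:ℝ)+2) * (c^n * c)) * h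
  calc ‖pc w (n+1)‖ * ((n:ℝ)+1+1) * c ^ (n+1) * ((n:ℝ)+1)
      = (‖pc w n‖ * c ^ n) * (‖w + (n:ℂ)‖ * (((n:ℝ)+2) * c)) := lhs_eq
    _ ≤ (‖pc w n‖ * c ^ n) * (r * ((n:ℝ)+1)^2) := by
        apply mul_le_mul_of_nonneg_left key (by positivity)
    _ = r * (‖pc w n‖ * ((n:ℝ)+1) * c ^ n) * ((n:ℝ)+1) := by ring

lemma summable_pc_pow (w : ℂ) {y : ℝ} (hy : |y| < 1) :
    Summable (fun n : ℕ => pc w n * (y:ℂ)^n) := by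
  apply Summable.of_norm_bounded (summable_M w (abs_nonneg y) hy)
  intro n
  rw [norm_mul, norm_pow]
  have hy' : ‖(y:ℂ)‖ = |y| := by simp [Complex.norm_real]
  rw [hy']
  have h2 : (1:ℝ) ≤ (n:ℝ)+1 := by linarith [Nat.cast_nonneg (α := ℝ) n]
  calc ‖pc w n‖ * |y|^n = ‖pc w n‖ * 1 * |y|^n := by ring
    _ ≤ ‖pc w n‖ * ((n:ℝ)+1) * |y|^n := by
        apply mul_le_mul_of_nonneg_right _ (by positivity)
        nlinarith [norm_nonneg (pc w n)]

def gfun (w : ℂ) (n : ℕ) (z : ℝ) : ℂ := pc w n * (z:ℂ)^n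

def gfun' (w : ℂ) (n : ℕ) (z : ℝ) : ℂ := pc w n * ((n:ℂ) * (z:ℂ)^(n-1))

theorem hasSum_binomial (w : ℂ) {y : ℝ} (h0 : 0 ≤ y) (h1 : y < 1) :
    HasSum (fun n : ℕ => pc w n * (y:ℂ)^n) (((1 - y : ℝ) : ℂ) ^ (-w)) := by
  have hys : Summable (fun n : ℕ => pc w n * (y:ℂ)^n) :=
    summable_pc_pow w (by rwa [_root_.abs_of_nonneg h0])
  suffices hS : (∑' n : ℕ, gfun w n y) = (((1 - y : ℝ) : ℂ) ^ (-w)) by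
    have h := hys.hasSum
    have he : (∑' n : ℕ, pc w n * (y:ℂ)^n) = (∑' n : ℕ, gfun w n y) := by
      simp [gfun]
    rwa [he, hS] at h
  rcases eq_or_lt_of_le h0 with h0' | h0'
  · rw [← h0']
    have h : (∑' n : ℕ, gfun w n 0) = 1 := by
      rw [tsum_eq_single 0 (fun n hn => by simp [gfun, zero_pow hn])]
      simp [gfun, pc_zero]
    rw [h]
    norm_num
  -- main case 0 < y < 1
  set c : ℝ := (1+y)/2 with hc
  have hc0 : 0 < c := by rw [hc]; linarith
  have hc1 : c < 1 := by rw [hc]; linarith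
  have hyc : y < c := by rw [hc]; linarith
  have hyt : y ∈ Ioo (-c) c := by constructor <;> [linarith; linarith]
  have h0t : (0:ℝ) ∈ Ioo (-c) c := by constructor <;> [linarith; linarith]
  set u : ℕ → ℝ := fun n => ‖pc w n‖ * ((n:ℝ)+1) * c^n / c with hu
  have hus : Summable u := ((summable_M w hc0.le hc1).div_const c)
  have hgder : ∀ n : ℕ, ∀ z : ℝ, HasDerivAt (gfun w n) (gfun' w n z) z := by
    intro n z
    exact ((hasDerivAt_pow n (z:ℂ)).const_mul (pc w n)).comp_ofReal
  have hgbound : ∀ (n : ℕ), ∀ z ∈ Ioo (-c) c, ‖gfun' w n z‖ ≤ u n := by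
    intro n z hz
    have hzc : |z| ≤ c := by
      rw [abs_le]; exact ⟨hz.1.le, hz.2.le⟩
    rw [gfun', hu]
    simp only [norm_mul, Complex.norm_natCast, norm_pow]
    have hzr : ‖(z:ℂ)‖ = |z| := by simp [Complex.norm_real]
    rw [hzr]
    match n with
    | 0 => simp; positivity
    | (m+1) =>
      simp only [Nat.add_sub_cancel]
      have e1 : |z|^m ≤ c^m := pow_le_pow_left₀ (abs_nonneg z) hzc m
      have e3 : ‖pc w (m+1)‖ * (((m+1:ℕ):ℝ)+1) * c^(m+1)/c = ‖pc w (m+1)‖ * (((m+1:ℕ):ℝ)+1) * c^m := by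
        rw [pow_succ]; field_simp
      rw [e3]
      push_cast
      have h5 : ‖pc w (m+1)‖ * ((m:ℝ) + 1) ≤ ‖pc w (m+1)‖ * ((m:ℝ)+1+1) := by
        nlinarith [norm_nonneg (pc w (m+1))]
      calc ‖pc w (m+1)‖ * (((m:ℝ)+1) * |z|^m)
          = (‖pc w (m+1)‖ * ((m:ℝ)+1)) * |z|^m := by ring
        _ ≤ (‖pc w (m+1)‖ * ((m:ℝ)+1+1)) * c^m := by
            apply mul_le_mul h5 e1 (by positivity) (by positivity)
  have hg0 : Summable fun n => gfun w n 0 := by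
    have := summable_pc_pow w (y := 0) (by norm_num)
    simpa [gfun] using this
  have hSder : ∀ z ∈ Ioo (-c) c,
      HasDerivAt (fun z => ∑' n, gfun w n z) (∑' n, gfun' w n z) z := by
    intro z hz
    exact hasDerivAt_tsum_of_isPreconnected hus isOpen_Ioo isPreconnected_Ioo
      (fun n zz _ => hgder n zz) hgbound h0t hg0 hz
  -- the ODE
  have hODE : ∀ z ∈ Ioo (-c) c,
      (1 - (z:ℂ)) * (∑' n, gfun' w n z) = w * (∑' n, gfun w n z) := by
    intro z hz
    have hz1 : |z| < 1 := lt_of_le_of_lt (abs_le.mpr ⟨hz.1.le, hz.2.le⟩) hc1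
    have s1 : Summable (fun n => gfun w n z) := by
      have := summable_pc_pow w hz1
      simpa [gfun] using this
    have s2 : Summable (fun n => gfun' w n z) :=
      hus.of_norm_bounded (fun n => hgbound n z hz)
    have hshift : (∑' n, gfun' w n z) = ∑' n : ℕ, gfun' w (n+1) z := by
      rw [s2.tsum_eq_zero_add]
      simp [gfun']
    have hterm : ∀ n : ℕ, gfun' w (n+1) z = w * (gfun w n z) + (z:ℂ) * (gfun' w n z) := by
      intro n
      rw [gfun, gfun']
      simp only [Nat.add_sub_cancel]
      match n with
      | 0 =>
        have hps := pc_succ w 0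
        push_cast at hps ⊢
        simp only [pow_zero, pow_one, Nat.zero_sub, Nat.cast_zero, gfun']
        ring_nf
        linear_combination hps
      | (m+1) =>
        have hps := pc_succ w (m+1)
        push_cast at hps ⊢
        simp only [gfun', Nat.add_sub_cancel]
        push_cast
        have hzp : (z:ℂ)^(m+1) = (z:ℂ) * (z:ℂ)^m := by rw [pow_succ]; ring
        calc pc w (m+1+1) * (((m:ℂ)+1+1) * (z:ℂ)^(m+1))
            = (pc w (m+1) * (w + ((m:ℂ)+1))) * (z:ℂ)^(m+1) := by
              linear_combination ((z:ℂ))^(m+1) * hps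
          _ = w * (pc w (m+1) * (z:ℂ)^(m+1)) + (z:ℂ) * (pc w (m+1) * (((m:ℂ)+1) * (z:ℂ) ^ m)) := by
              rw [hzp]; ring
    have hsplit : (∑' n, gfun' w n z)
        = w * (∑' n, gfun w n z) + (z:ℂ) * (∑' n, gfun' w n z) := by
      calc (∑' n, gfun' w n z) = ∑' n, gfun' w (n+1) z := hshift
        _ = ∑' n, (w * gfun w n z + (z:ℂ) * gfun' w n z) := tsum_congr hterm
        _ = w * (∑' n, gfun w n z) + (z:ℂ) * (∑' n, gfun' w n z) := by
            rw [(s1.mul_left w).tsum_add (s2.mul_left (z:ℂ)), tsum_mul_left, tsum_mul_left]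
    linear_combination hsplit
  -- the auxiliary function
  have hqder : ∀ z ∈ Ioo (-c) c,
      HasDerivAt (fun z : ℝ => (1 - (z:ℂ))^w) (w * (1-(z:ℂ))^(w-1) * (-1)) z := by
    intro z hz
    have hslit : (1 - (z:ℂ)) ∈ Complex.slitPlane := by
      rw [Complex.mem_slitPlane_iff]
      left
      simp only [Complex.sub_re, Complex.one_re, Complex.ofReal_re]
      linarith [hz.2]
    have hf : HasDerivAt (fun uu : ℂ => 1 - uu) (-1) (z:ℂ) := (hasDerivAt_id _).const_sub 1
    exact (hf.cpow_const hslit).comp_ofReal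
  have hGder : ∀ z ∈ Ioo (-c) c,
      HasDerivAt (fun z : ℝ => (∑' n, gfun w n z) * (1 - (z:ℂ))^w) 0 z := by
    intro z hz
    have h := (hSder z hz).mul (hqder z hz)
    have hne : (1 - (z:ℂ)) ≠ 0 := by
      intro hcon
      have h2 : (1 - (z:ℂ)).re = 0 := by rw [hcon]; simp
      simp only [Complex.sub_re, Complex.one_re, Complex.ofReal_re] at h2
      have : z < 1 := lt_of_lt_of_le hz.2 hc1.le
      linarith
    have hw : (1-(z:ℂ))^w = (1-(z:ℂ))^(w-1) * (1-(z:ℂ))^(1:ℂ) := by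
      rw [← Complex.cpow_add _ _ hne]
      congr 1
      ring
    have heq : (∑' n, gfun' w n z) * (1 - (z:ℂ))^w
        + (∑' n, gfun w n z) * (w * (1-(z:ℂ))^(w-1) * (-1)) = 0 := by
      rw [hw, Complex.cpow_one]
      have h3 := hODE z hz
      linear_combination ((1:ℂ)-(z:ℂ))^(w-1) * h3
    rwa [heq] at h
  -- constancy on [0, y]
  have hsub : Icc (0:ℝ) y ⊆ Ioo (-c) c := by
    intro z hz
    exact ⟨by simp at hz ⊢; linarith [hz.1], by simp at hz ⊢; linarith [hz.2]⟩
  have hconst := constant_of_has_deriv_right_zero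
    (f := fun z : ℝ => (∑' n, gfun w n z) * (1 - (z:ℂ))^w) (a := 0) (b := y)
    (fun z hz => ((hGder z (hsub hz)).continuousAt).continuousWithinAt)
    (fun z hz => ((hGder z (hsub (Ico_subset_Icc_self hz))).hasDerivWithinAt))
    y ⟨le_refl 0 |>.trans h0, le_refl y⟩
  have hG0 : (∑' n, gfun w n (0:ℝ)) * (1 - ((0:ℝ):ℂ))^w = 1 := by
    have h : (∑' n : ℕ, gfun w n 0) = 1 := by
      rw [tsum_eq_single 0 (fun n hn => by simp [gfun, zero_pow hn])]
      simp [gfun, pc_zero]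
    rw [h]
    norm_num
  rw [hG0] at hconst
  -- conclude
  have hne : ((1 - y : ℝ) : ℂ) ≠ 0 := by
    simp only [ne_eq, Complex.ofReal_eq_zero]
    linarith
  have hcast : (1 - ((y:ℝ):ℂ)) = ((1 - y : ℝ) : ℂ) := by push_cast; ring
  rw [hcast] at hconst
  rw [Complex.cpow_neg]
  exact eq_inv_of_mul_eq_one_left hconst

lemma re_add_nat_pos {z : ℂ} (hz : 0 < z.re) (n : ℕ) : 0 < (z + n).re := by
  simp only [Complex.add_re, Complex.natCast_re]
  positivity

lemma add_nat_ne_zero {z : ℂ} (hz : 0 < z.re) (n : ℕ) : z + n ≠ 0 := by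
  intro h
  have h2 := re_add_nat_pos hz n
  rw [h] at h2
  simp at h2

lemma Gamma_ne_zero_re_pos {z : ℂ} (hz : 0 < z.re) : Complex.Gamma z ≠ 0 := by
  apply Complex.Gamma_ne_zero
  intro m h
  rw [h] at hz
  simp only [Complex.neg_re, Complex.natCast_re] at hz
  have : (0:ℝ) ≤ m := Nat.cast_nonneg m
  linarith

lemma Gamma_poch (z : ℂ) (hz : 0 < z.re) (n : ℕ) :
    Complex.Gamma (z + n) = (ascPochhammer ℂ n).eval z * Complex.Gamma z := by
  induction n with
  | zero => simp
  | succ m ih =>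
    have hcast : (z + ((m+1 : ℕ):ℂ)) = (z + m) + 1 := by push_cast; ring
    rw [hcast, Complex.Gamma_add_one _ (add_nat_ne_zero hz m), ih, ascPochhammer_succ_eval]
    ring

lemma poch_ne_zero {z : ℂ} (hz : 0 < z.re) (n : ℕ) : (ascPochhammer ℂ n).eval z ≠ 0 := by
  induction n with
  | zero => simp
  | succ m ih =>
    rw [ascPochhammer_succ_eval]
    exact mul_ne_zero ih (add_nat_ne_zero hz m)

lemma term_eq (a b : ℂ) (ha : 0 < a.re) (hb : 0 < b.re) (n : ℕ) (x : ℂ) :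
    Complex.Gamma a * Complex.Gamma b / Complex.Gamma (a+b) *
      ((ascPochhammer ℂ n).eval a * (ascPochhammer ℂ n).eval b /
        ((ascPochhammer ℂ n).eval (a+b) * (n.factorial : ℂ)) * x^n)
    = pc a n * x^n * Complex.betaIntegral (b + n) a := by
  have hab : 0 < (a+b).re := by
    simp only [Complex.add_re]; positivity
  have hbn : 0 < (b + (n:ℂ)).re := re_add_nat_pos hb n
  have h2 := Complex.Gamma_mul_Gamma_eq_betaIntegral hbn ha
  have habn : 0 < (b + (n:ℂ) + a).re := by
    simp only [Complex.add_re]; positivity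
  have h3 : Complex.Gamma (b + n + a) ≠ 0 := Gamma_ne_zero_re_pos habn
  have hbeta : Complex.betaIntegral (b + n) a
      = Complex.Gamma (b + n) * Complex.Gamma a / Complex.Gamma (b + n + a) := by
    rw [h2, mul_div_cancel_left₀ _ h3]
  have hgb : Complex.Gamma (b + n) = (ascPochhammer ℂ n).eval b * Complex.Gamma b :=
    Gamma_poch b hb n
  have hgabn : Complex.Gamma (b + n + a)
      = (ascPochhammer ℂ n).eval (a+b) * Complex.Gamma (a+b) := by
    have : b + (n:ℂ) + a = (a + b) + n := by ring
    rw [this, Gamma_poch (a+b) hab n]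
  rw [hbeta, hgb, hgabn, pc]
  have h4 : Complex.Gamma (a+b) ≠ 0 := Gamma_ne_zero_re_pos hab
  have h5 : (ascPochhammer ℂ n).eval (a+b) ≠ 0 := poch_ne_zero hab n
  have h6 : ((n.factorial : ℕ) : ℂ) ≠ 0 := Nat.cast_ne_zero.mpr n.factorial_ne_zero
  field_simp

lemma summable_pc_norm (w : ℂ) {r : ℝ} (h0 : 0 ≤ r) (h1 : r < 1) :
    Summable (fun n : ℕ => ‖pc w n‖ * r^n) := by
  apply Summable.of_nonneg_of_le (fun n => by positivity) _ (summable_M w h0 h1)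
  intro n
  have h2 : (1:ℝ) ≤ (n:ℝ)+1 := by linarith [Nat.cast_nonneg (α := ℝ) n]
  calc ‖pc w n‖ * r^n = ‖pc w n‖ * 1 * r^n := by ring
    _ ≤ ‖pc w n‖*((n:ℝ)+1)*r^n := by
        apply mul_le_mul_of_nonneg_right _ (pow_nonneg h0 n)
        exact mul_le_mul_of_nonneg_left h2 (norm_nonneg _)

/-- integrand for the interchange -/
def Fint (a b : ℂ) (x : ℝ) (n : ℕ) (s : ℝ) : ℂ :=
  pc a n * (x:ℂ)^n * ((s:ℂ)^(b+n-1) * (1-(s:ℂ))^(a-1))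

theorem rep (a b : ℂ) (ha : 0 < a.re) (hb : 0 < b.re) {x : ℝ} (hx0 : 0 < x) (hx1 : x < 1) :
    Complex.Gamma a * Complex.Gamma b / Complex.Gamma (a+b) * hyp a b (a+b) ((x : ℝ) : ℂ) =
    ∫ s in Ioc (0:ℝ) 1,
      (s:ℂ)^(b-1) * (1 - (s:ℂ))^(a-1) * (((1 - x*s : ℝ)):ℂ)^(-a) := by
  have hhyp : Complex.Gamma a * Complex.Gamma b / Complex.Gamma (a+b) * hyp a b (a+b) (x:ℂ)
      = ∑' n, (pc a n * (x:ℂ)^n * Complex.betaIntegral (b+n) a) := by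
    rw [hyp, ← tsum_mul_left]
    exact tsum_congr (fun n => term_eq a b ha hb n (x:ℂ))
  have hbeta_int : ∀ n : ℕ, pc a n * (x:ℂ)^n * Complex.betaIntegral (b+n) a
      = ∫ s in Ioc (0:ℝ) 1, Fint a b x n s := by
    intro n
    rw [Complex.betaIntegral, intervalIntegral.integral_of_le zero_le_one,
      ← integral_const_mul]
    rfl
  have hF_int : ∀ n : ℕ, IntegrableOn (Fint a b x n) (Ioc (0:ℝ) 1) := by
    intro n
    have h := (Complex.betaIntegral_convergent (re_add_nat_pos hb n) ha).1
    exact h.const_mul _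
  -- norm bound
  have hK0int : IntegrableOn (fun s : ℝ => ‖(s:ℂ)^(b-1) * (1-(s:ℂ))^(a-1)‖) (Ioc (0:ℝ) 1) := by
    have h := (Complex.betaIntegral_convergent hb ha).1
    exact h.norm
  set K0 : ℝ := ∫ s in Ioc (0:ℝ) 1, ‖(s:ℂ)^(b-1) * (1-(s:ℂ))^(a-1)‖ with hK0
  have hF_sum : Summable (fun n => ∫ s in Ioc (0:ℝ) 1, ‖Fint a b x n s‖) := by
    apply Summable.of_nonneg_of_le
      (fun n => MeasureTheory.integral_nonneg (fun s => norm_nonneg _))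
      _ ((summable_pc_norm a hx0.le hx1).mul_right K0)
    intro n
    have heq : (fun s : ℝ => ‖Fint a b x n s‖)
        = fun s : ℝ => (‖pc a n‖ * x^n) * ‖(s:ℂ)^(b+n-1) * (1-(s:ℂ))^(a-1)‖ := by
      funext s
      rw [Fint, norm_mul, norm_mul, norm_pow]
      have : ‖(x:ℂ)‖ = x := by rw [Complex.norm_real, Real.norm_of_nonneg hx0.le]
      rw [this]
    rw [heq, integral_const_mul]
    have hmono : (∫ s in Ioc (0:ℝ) 1, ‖(s:ℂ)^(b+n-1) * (1-(s:ℂ))^(a-1)‖) ≤ K0 := by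
      rw [hK0]
      apply MeasureTheory.setIntegral_mono_on
        ((Complex.betaIntegral_convergent (re_add_nat_pos hb n) ha).1.norm)
        hK0int measurableSet_Ioc
      intro s hs
      rw [norm_mul, norm_mul]
      apply mul_le_mul_of_nonneg_right _ (norm_nonneg _)
      rw [Complex.norm_cpow_eq_rpow_re_of_pos hs.1, Complex.norm_cpow_eq_rpow_re_of_pos hs.1]
      apply Real.rpow_le_rpow_of_exponent_ge hs.1 hs.2
      simp only [Complex.sub_re, Complex.add_re, Complex.one_re, Complex.natCast_re]
      linarith [Nat.cast_nonneg (α := ℝ) n]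
    calc ‖pc a n‖ * x^n * (∫ s in Ioc (0:ℝ) 1, ‖(s:ℂ)^(b+n-1) * (1-(s:ℂ))^(a-1)‖)
        ≤ ‖pc a n‖ * x^n * K0 := by
          apply mul_le_mul_of_nonneg_left hmono (by positivity)
      _ = ‖pc a n‖ * x^n * K0 := rfl
  have hswap := MeasureTheory.integral_tsum_of_summable_integral_norm hF_int hF_sum
  have hpt : ∀ s ∈ Ioc (0:ℝ) 1, (∑' n, Fint a b x n s)
      = (s:ℂ)^(b-1) * (1 - (s:ℂ))^(a-1) * (((1 - x*s : ℝ)):ℂ)^(-a) := by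
    intro s hs
    have hs0 : (0:ℝ) < s := hs.1
    have hsne : (s:ℂ) ≠ 0 := by
      simp only [ne_eq, Complex.ofReal_eq_zero]
      exact ne_of_gt hs0
    have hterm : ∀ n : ℕ, Fint a b x n s
        = ((s:ℂ)^(b-1) * (1-(s:ℂ))^(a-1)) * (pc a n * ((x*s : ℝ):ℂ)^n) := by
      intro n
      rw [Fint]
      have h7 : (s:ℂ)^(b+(n:ℂ)-1) = (s:ℂ)^(b-1) * (s:ℂ)^(n:ℕ) := by
        rw [← Complex.cpow_natCast]
        rw [← Complex.cpow_add _ _ hsne]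
        congr 1
        ring
      rw [h7]
      push_cast
      ring
    rw [tsum_congr hterm, tsum_mul_left]
    have hxs0 : (0:ℝ) ≤ x*s := by positivity
    have hxs1 : x*s < 1 := by nlinarith [hs.2]
    rw [(hasSum_binomial a hxs0 hxs1).tsum_eq]
  calc Complex.Gamma a * Complex.Gamma b / Complex.Gamma (a+b) * hyp a b (a+b) (x:ℂ)
      = ∑' n, (pc a n * (x:ℂ)^n * Complex.betaIntegral (b+n) a) := hhyp
    _ = ∑' n, ∫ s in Ioc (0:ℝ) 1, Fint a b x n s := tsum_congr hbeta_int
    _ = ∫ s in Ioc (0:ℝ) 1, ∑' n, Fint a b x n s := hswap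
    _ = ∫ s in Ioc (0:ℝ) 1,
          (s:ℂ)^(b-1) * (1 - (s:ℂ))^(a-1) * (((1 - x*s : ℝ)):ℂ)^(-a) := by
        apply MeasureTheory.setIntegral_congr_fun measurableSet_Ioc
        intro s hs
        exact hpt s hs

/-- dominating function -/
def Hd (x s : ℝ) : ℝ :=
  s ^ (-(1/4) : ℝ) * (1-s) ^ (-(3/4) : ℝ) * (1 - x*s) ^ (-(1/4) : ℝ)

lemma Hd_meas (x : ℝ) : Measurable (Hd x) := by
  unfold Hd
  fun_prop

lemma two_rpow_quarter_le : ((1/2:ℝ)) ^ (-(1/4):ℝ) ≤ 2 := by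
  rw [show ((1/2:ℝ)) = 2⁻¹ by norm_num, Real.inv_rpow (by norm_num), ← Real.rpow_neg (by norm_num)]
  calc (2:ℝ) ^ (-(-(1/4)):ℝ) = (2:ℝ)^((1/4):ℝ) := by norm_num
    _ ≤ (2:ℝ)^(1:ℝ) := Real.rpow_le_rpow_of_exponent_le (by norm_num) (by norm_num)
    _ = 2 := Real.rpow_one 2

lemma Hd_integral (x : ℝ) (hx2 : 1/2 < x) (hx1 : x < 1) :
    IntegrableOn (Hd x) (Ioc (0:ℝ) 1) ∧
    (∫ s in Ioc (0:ℝ) 1, Hd x s) ≤ 11 + 2 * Real.log (1/(1-x)) := by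
  have hxpos : (0:ℝ) < x := by linarith
  have h1x : (0:ℝ) < 1 - x := by linarith
  have hm := Hd_meas x
  -- pointwise bounds
  have hHd_nonneg : ∀ s ∈ Ioc (0:ℝ) 1, 0 ≤ Hd x s := by
    intro s hs
    have h1 : (0:ℝ) ≤ 1 - s := by linarith [hs.2]
    have h2 : (0:ℝ) ≤ 1 - x*s := by nlinarith [hs.1, hs.2]
    unfold Hd
    have := hs.1.le
    positivity
  have hb1 : ∀ s ∈ Ioc (0:ℝ) (1/2), Hd x s ≤ 2 * s ^ (-(1/4):ℝ) := by
    intro s hs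
    have hs0 : 0 < s := hs.1
    have hs2 : s ≤ 1/2 := hs.2
    have h1s : (1/2:ℝ) ≤ 1 - s := by linarith
    have h2s : (1/2:ℝ) ≤ 1 - x*s := by nlinarith
    have e1 : (1-s) ^ (-(3/4):ℝ) ≤ ((1/2:ℝ)) ^ (-(3/4):ℝ) :=
      Real.rpow_le_rpow_of_nonpos (by norm_num) h1s (by norm_num)
    have e2 : (1-x*s) ^ (-(1/4):ℝ) ≤ ((1/2:ℝ)) ^ (-(1/4):ℝ) :=
      Real.rpow_le_rpow_of_nonpos (by norm_num) h2s (by norm_num)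
    have hhalf : ((1/2:ℝ)) ^ (-(3/4):ℝ) * ((1/2:ℝ)) ^ (-(1/4):ℝ) = 2 := by
      rw [← Real.rpow_add (by norm_num : (0:ℝ) < 1/2),
        show (-(3/4:ℝ)) + (-(1/4:ℝ)) = -1 by norm_num, Real.rpow_neg_one]
      norm_num
    calc Hd x s = s ^ (-(1/4):ℝ) * ((1-s) ^ (-(3/4):ℝ) * (1 - x*s) ^ (-(1/4):ℝ)) := by
          unfold Hd; ring
      _ ≤ s ^ (-(1/4):ℝ) * (((1/2:ℝ)) ^ (-(3/4):ℝ) * ((1/2:ℝ)) ^ (-(1/4):ℝ)) := by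
          apply mul_le_mul_of_nonneg_left _ (Real.rpow_nonneg hs0.le _)
          apply mul_le_mul e1 e2 (Real.rpow_nonneg (by nlinarith) _) (Real.rpow_nonneg (by norm_num) _)
      _ = 2 * s ^ (-(1/4):ℝ) := by rw [hhalf]; ring
  have hb2 : ∀ s ∈ Ioc (1/2:ℝ) x, Hd x s ≤ 2 * (1-s)⁻¹ := by
    intro s hs
    have hs0 : (1/2:ℝ) < s := hs.1
    have hsx : s ≤ x := hs.2
    have h1s : (0:ℝ) < 1 - s := by linarith
    have hxs : x*s ≤ s := by nlinarith
    have h2s : (1-s:ℝ) ≤ 1 - x*s := by linarith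
    have e1 : s ^ (-(1/4):ℝ) ≤ ((1/2:ℝ)) ^ (-(1/4):ℝ) :=
      Real.rpow_le_rpow_of_nonpos (by norm_num) hs0.le (by norm_num)
    have e2 : (1-x*s) ^ (-(1/4):ℝ) ≤ (1-s) ^ (-(1/4):ℝ) :=
      Real.rpow_le_rpow_of_nonpos h1s h2s (by norm_num)
    have emul : (1-s) ^ (-(3/4):ℝ) * (1-s) ^ (-(1/4):ℝ) = (1-s)⁻¹ := by
      rw [← Real.rpow_add h1s, show (-(3/4:ℝ)) + (-(1/4:ℝ)) = -1 by norm_num,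
        Real.rpow_neg_one]
    calc Hd x s = (s ^ (-(1/4):ℝ) * (1 - x*s) ^ (-(1/4):ℝ)) * (1-s) ^ (-(3/4):ℝ) := by
          unfold Hd; ring
      _ ≤ (((1/2:ℝ)) ^ (-(1/4):ℝ) * (1-s) ^ (-(1/4):ℝ)) * (1-s) ^ (-(3/4):ℝ) := by
          apply mul_le_mul_of_nonneg_right _ (Real.rpow_nonneg h1s.le _)
          apply mul_le_mul e1 e2 (Real.rpow_nonneg (by nlinarith) _) (Real.rpow_nonneg (by norm_num) _)
      _ = ((1/2:ℝ)) ^ (-(1/4):ℝ) * ((1-s) ^ (-(3/4):ℝ) * (1-s) ^ (-(1/4):ℝ)) := by ring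
      _ = ((1/2:ℝ)) ^ (-(1/4):ℝ) * (1-s)⁻¹ := by rw [emul]
      _ ≤ 2 * (1-s)⁻¹ := by
          apply mul_le_mul_of_nonneg_right two_rpow_quarter_le (by positivity)
  have hb3 : ∀ s ∈ Ioc x (1:ℝ), Hd x s ≤ (2 * (1-x) ^ (-(1/4):ℝ)) * (1-s) ^ (-(3/4):ℝ) := by
    intro s hs
    have hs0 : x < s := hs.1
    have hs1 : s ≤ 1 := hs.2
    have h0s : (1/2:ℝ) ≤ s := by linarith
    have h1s : (0:ℝ) ≤ 1 - s := by linarith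
    have hxx : 1 - x ≤ 1 - x*s := by nlinarith
    have e1 : s ^ (-(1/4):ℝ) ≤ ((1/2:ℝ)) ^ (-(1/4):ℝ) :=
      Real.rpow_le_rpow_of_nonpos (by norm_num) h0s (by norm_num)
    have e1' : s ^ (-(1/4):ℝ) ≤ 2 := le_trans e1 two_rpow_quarter_le
    have e2 : (1-x*s) ^ (-(1/4):ℝ) ≤ (1-x) ^ (-(1/4):ℝ) :=
      Real.rpow_le_rpow_of_nonpos h1x hxx (by norm_num)
    calc Hd x s = (s ^ (-(1/4):ℝ) * (1 - x*s) ^ (-(1/4):ℝ)) * (1-s) ^ (-(3/4):ℝ) := by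
          unfold Hd; ring
      _ ≤ (2 * (1-x) ^ (-(1/4):ℝ)) * (1-s) ^ (-(3/4):ℝ) := by
          apply mul_le_mul_of_nonneg_right _ (Real.rpow_nonneg h1s _)
          apply mul_le_mul e1' e2 (Real.rpow_nonneg (by nlinarith) _) (by norm_num)
  -- integrabilities of dominators
  have hint1 : IntegrableOn (fun s : ℝ => 2 * s ^ (-(1/4):ℝ)) (Ioc (0:ℝ) (1/2)) := by
    have h := (intervalIntegral.intervalIntegrable_rpow' (a := 0) (b := 1/2)
      (r := -(1/4)) (by norm_num)).1
    exact h.const_mul 2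
  have hint2 : IntegrableOn (fun s : ℝ => 2 * (1-s)⁻¹) (Ioc (1/2:ℝ) x) := by
    apply (ContinuousOn.integrableOn_Icc _).mono_set Ioc_subset_Icc_self
    apply ContinuousOn.mul continuousOn_const
    apply ContinuousOn.inv₀ (continuousOn_const.sub continuousOn_id)
    intro s hs
    have : s ≤ x := hs.2
    intro hzero
    have : (1:ℝ) - s = 0 := hzero
    linarith
  have hint3 : IntegrableOn (fun s : ℝ => (2 * (1-x) ^ (-(1/4):ℝ)) * (1-s) ^ (-(3/4):ℝ))
      (Ioc x 1) := by
    have h := (intervalIntegral.intervalIntegrable_rpow' (a := 0) (b := 1-x)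
      (r := -(3/4)) (by norm_num))
    have h2 := (h.comp_sub_left 1).symm
    simp only [sub_zero, sub_sub_cancel] at h2
    exact (h2.1).const_mul _
  -- integrability of Hd on pieces
  have hI1 : IntegrableOn (Hd x) (Ioc (0:ℝ) (1/2)) := by
    apply Integrable.mono' hint1 (hm.aestronglyMeasurable.restrict)
    rw [ae_restrict_iff' measurableSet_Ioc]
    filter_upwards with s hs
    rw [Real.norm_of_nonneg (hHd_nonneg s ⟨hs.1, by linarith [hs.2]⟩)]
    exact hb1 s hs
  have hI2 : IntegrableOn (Hd x) (Ioc (1/2:ℝ) x) := by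
    apply Integrable.mono' hint2 (hm.aestronglyMeasurable.restrict)
    rw [ae_restrict_iff' measurableSet_Ioc]
    filter_upwards with s hs
    rw [Real.norm_of_nonneg (hHd_nonneg s ⟨by linarith [hs.1], by linarith [hs.2]⟩)]
    exact hb2 s hs
  have hI3 : IntegrableOn (Hd x) (Ioc x (1:ℝ)) := by
    apply Integrable.mono' hint3 (hm.aestronglyMeasurable.restrict)
    rw [ae_restrict_iff' measurableSet_Ioc]
    filter_upwards with s hs
    rw [Real.norm_of_nonneg (hHd_nonneg s ⟨by linarith [hs.1], hs.2⟩)]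
    exact hb3 s hs
  -- piece values
  have hIv1 : (∫ s in Ioc (0:ℝ) (1/2), Hd x s) ≤ 3 := by
    have step := setIntegral_mono_on hI1 hint1 measurableSet_Ioc hb1
    have hval : (∫ s in Ioc (0:ℝ) (1/2), 2 * s ^ (-(1/4):ℝ)) ≤ 3 := by
      rw [← intervalIntegral.integral_of_le (by norm_num : (0:ℝ) ≤ 1/2)]
      rw [intervalIntegral.integral_const_mul]
      rw [integral_rpow (Or.inl (by norm_num))]
      rw [Real.zero_rpow (by norm_num)]
      have hle : ((1/2:ℝ)) ^ ((-(1/4:ℝ)) + 1) ≤ 1 :=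
        Real.rpow_le_one (by norm_num) (by norm_num) (by norm_num)
      rw [show (-(1/4:ℝ)) + 1 = 3/4 by norm_num] at hle ⊢
      nlinarith
    linarith
  have hIv2 : (∫ s in Ioc (1/2:ℝ) x, Hd x s) ≤ 2 * Real.log (1/(1-x)) := by
    have step := setIntegral_mono_on hI2 hint2 measurableSet_Ioc hb2
    have hval : (∫ s in Ioc (1/2:ℝ) x, 2 * (1-s)⁻¹) ≤ 2 * Real.log (1/(1-x)) := by
      rw [← intervalIntegral.integral_of_le hx2.le]
      rw [intervalIntegral.integral_const_mul]
      have hcomp : (∫ s in (1/2:ℝ)..x, (1-s)⁻¹)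
          = ∫ u in (1-x)..(1-(1/2:ℝ)), u⁻¹ :=
        intervalIntegral.integral_comp_sub_left (fun u => u⁻¹) 1
      rw [hcomp]
      rw [integral_inv (by
        intro hmem
        rw [Set.mem_uIcc] at hmem
        rcases hmem with ⟨h1, h2⟩ | ⟨h1, h2⟩ <;> linarith)]
      have hlog : Real.log ((1-(1/2:ℝ))/(1-x)) ≤ Real.log (1/(1-x)) := by
        apply Real.log_le_log (by positivity)
        exact (div_le_div_iff_of_pos_right h1x).mpr (by norm_num)
      linarith
    linarith
  have hIv3 : (∫ s in Ioc x (1:ℝ), Hd x s) ≤ 8 := by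
    have step := setIntegral_mono_on hI3 hint3 measurableSet_Ioc hb3
    have hval : (∫ s in Ioc x (1:ℝ), (2 * (1-x) ^ (-(1/4):ℝ)) * (1-s) ^ (-(3/4):ℝ)) ≤ 8 := by
      rw [← intervalIntegral.integral_of_le hx1.le]
      rw [intervalIntegral.integral_const_mul]
      have hcomp : (∫ s in x..(1:ℝ), (1-s) ^ (-(3/4):ℝ))
          = ∫ u in (1-(1:ℝ))..(1-x), u ^ (-(3/4):ℝ) :=
        intervalIntegral.integral_comp_sub_left (fun u => u ^ (-(3/4):ℝ)) 1
      rw [hcomp]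
      rw [show (1-(1:ℝ)) = 0 by norm_num]
      rw [integral_rpow (Or.inl (by norm_num))]
      rw [Real.zero_rpow (by norm_num)]
      rw [show (-(3/4:ℝ)) + 1 = 1/4 by norm_num]
      have hprod : (1-x) ^ (-(1/4):ℝ) * (1-x) ^ ((1/4):ℝ) = 1 := by
        rw [← Real.rpow_add h1x]
        norm_num
      calc 2 * (1-x) ^ (-(1/4):ℝ) * (((1-x) ^ ((1/4):ℝ) - 0) / (1/4))
          = 8 * ((1-x) ^ (-(1/4):ℝ) * (1-x) ^ ((1/4):ℝ)) := by ring
        _ = 8 := by rw [hprod]; ring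
        _ ≤ 8 := le_refl 8
    linarith
  -- combine
  have hd12 : Disjoint (Ioc (0:ℝ) (1/2)) (Ioc (1/2:ℝ) x) := Ioc_disjoint_Ioc_of_le le_rfl
  have hd23 : Disjoint (Ioc (0:ℝ) x) (Ioc x (1:ℝ)) := Ioc_disjoint_Ioc_of_le le_rfl
  have hu1 : Ioc (0:ℝ) (1/2) ∪ Ioc (1/2:ℝ) x = Ioc (0:ℝ) x :=
    Ioc_union_Ioc_eq_Ioc (by norm_num) hx2.le
  have hu2 : Ioc (0:ℝ) x ∪ Ioc x (1:ℝ) = Ioc (0:ℝ) 1 :=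
    Ioc_union_Ioc_eq_Ioc hxpos.le hx1.le
  have hI12 : IntegrableOn (Hd x) (Ioc (0:ℝ) x) := by
    rw [← hu1]; exact hI1.union hI2
  have hIall : IntegrableOn (Hd x) (Ioc (0:ℝ) 1) := by
    rw [← hu2]; exact hI12.union hI3
  refine ⟨hIall, ?_⟩
  have hsplit2 : (∫ s in Ioc (0:ℝ) 1, Hd x s)
      = (∫ s in Ioc (0:ℝ) x, Hd x s) + ∫ s in Ioc x (1:ℝ), Hd x s := by
    rw [← hu2]
    exact setIntegral_union hd23 measurableSet_Ioc hI12 hI3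
  have hsplit1 : (∫ s in Ioc (0:ℝ) x, Hd x s)
      = (∫ s in Ioc (0:ℝ) (1/2), Hd x s) + ∫ s in Ioc (1/2:ℝ) x, Hd x s := by
    rw [← hu1]
    exact setIntegral_union hd12 measurableSet_Ioc hI1 hI2
  rw [hsplit2, hsplit1]
  linarith

lemma norm_integrand_le {a b : ℂ} (ha4 : 1/4 ≤ a.re) (hab : b.re = a.re + 1/2)
    {x s : ℝ} (hx0 : 0 < x) (hx1 : x < 1) (hs : s ∈ Ioo (0:ℝ) 1) :
    ‖(s:ℂ)^(b-1) * (1-(s:ℂ))^(a-1) * ((1-x*s:ℝ):ℂ)^(-a)‖ ≤ Hd x s := by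
  obtain ⟨hs0, hs1⟩ := hs
  have hA : (0:ℝ) < 1 - s := by linarith
  have hxs : x*s ≤ s := by nlinarith
  have hB : (0:ℝ) < 1 - x*s := by linarith
  have hAB : (1-s:ℝ) ≤ 1 - x*s := by linarith
  have hcast : (1 : ℂ) - (s:ℂ) = ((1-s:ℝ):ℂ) := by push_cast; ring
  rw [hcast, norm_mul, norm_mul]
  rw [Complex.norm_cpow_eq_rpow_re_of_pos hs0,
    Complex.norm_cpow_eq_rpow_re_of_pos hA,
    Complex.norm_cpow_eq_rpow_re_of_pos hB]
  simp only [Complex.sub_re, Complex.one_re, Complex.neg_re]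
  set al := a.re with hal
  have e1 : s ^ (b.re - 1) ≤ s ^ (-(1/4):ℝ) := by
    apply Real.rpow_le_rpow_of_exponent_ge hs0 hs1.le
    rw [hab]; linarith
  have key : (1-s:ℝ) ^ (al - 1/4) ≤ (1-x*s:ℝ) ^ (al - 1/4) :=
    Real.rpow_le_rpow hA.le hAB (by linarith)
  have eA : (1-s:ℝ) ^ (al - 1) = (1-s:ℝ) ^ (-(3/4):ℝ) * (1-s:ℝ) ^ (al - 1/4) := by
    rw [← Real.rpow_add hA]
    congr 1
    ring
  have eB : (1-x*s:ℝ) ^ (-al) = (1-x*s:ℝ) ^ (-(1/4):ℝ) * ((1-x*s:ℝ) ^ (al - 1/4))⁻¹ := by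
    rw [← Real.rpow_neg hB.le, ← Real.rpow_add hB]
    congr 1
    ring
  have hratio : (1-s:ℝ) ^ (al - 1/4) * ((1-x*s:ℝ) ^ (al - 1/4))⁻¹ ≤ 1 := by
    rw [← div_eq_mul_inv, div_le_one (Real.rpow_pos_of_pos hB _)]
    exact key
  have e2 : (1-s:ℝ) ^ (al - 1) * (1-x*s:ℝ) ^ (-al)
      ≤ (1-s:ℝ) ^ (-(3/4):ℝ) * (1-x*s:ℝ) ^ (-(1/4):ℝ) := by
    rw [eA, eB]
    calc (1-s:ℝ) ^ (-(3/4):ℝ) * (1-s:ℝ) ^ (al - 1/4) *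
          ((1-x*s:ℝ) ^ (-(1/4):ℝ) * ((1-x*s:ℝ) ^ (al - 1/4))⁻¹)
        = ((1-s:ℝ) ^ (-(3/4):ℝ) * (1-x*s:ℝ) ^ (-(1/4):ℝ)) *
          ((1-s:ℝ) ^ (al - 1/4) * ((1-x*s:ℝ) ^ (al - 1/4))⁻¹) := by ring
      _ ≤ ((1-s:ℝ) ^ (-(3/4):ℝ) * (1-x*s:ℝ) ^ (-(1/4):ℝ)) * 1 := by
          apply mul_le_mul_of_nonneg_left hratio
          positivity
      _ = (1-s:ℝ) ^ (-(3/4):ℝ) * (1-x*s:ℝ) ^ (-(1/4):ℝ) := by ring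
  calc s ^ (b.re - 1) * (1-s:ℝ) ^ (al - 1) * (1-x*s:ℝ) ^ (-al)
      = s ^ (b.re - 1) * ((1-s:ℝ) ^ (al - 1) * (1-x*s:ℝ) ^ (-al)) := by ring
    _ ≤ s ^ (-(1/4):ℝ) * ((1-s:ℝ) ^ (-(3/4):ℝ) * (1-x*s:ℝ) ^ (-(1/4):ℝ)) := by
        apply mul_le_mul e1 e2 _ (Real.rpow_nonneg hs0.le _)
        positivity
    _ = Hd x s := by unfold Hd; ring

lemma norm_int_le (a b : ℂ) (ha4 : 1/4 ≤ a.re) (hab : b.re = a.re + 1/2)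
    {x : ℝ} (hx2 : 1/2 < x) (hx1 : x < 1) :
    ‖∫ s in Ioc (0:ℝ) 1, (s:ℂ)^(b-1) * (1-(s:ℂ))^(a-1) * ((1-x*s:ℝ):ℂ)^(-a)‖
      ≤ 11 + 2 * Real.log (1/(1-x)) := by
  have hx0 : (0:ℝ) < x := by linarith
  obtain ⟨hint, hbound⟩ := Hd_integral x hx2 hx1
  have hne : ∀ᵐ s : ℝ ∂(volume.restrict (Ioc (0:ℝ) 1)), s ≠ (1:ℝ) := by
    apply ae_restrict_of_ae
    rw [MeasureTheory.ae_iff]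
    have : {s : ℝ | ¬ s ≠ 1} = {(1:ℝ)} := by
      ext u; simp
    rw [this]
    exact Real.volume_singleton
  have hae : ∀ᵐ s : ℝ ∂(volume.restrict (Ioc (0:ℝ) 1)),
      ‖(s:ℂ)^(b-1) * (1-(s:ℂ))^(a-1) * ((1-x*s:ℝ):ℂ)^(-a)‖ ≤ Hd x s := by
    filter_upwards [ae_restrict_mem measurableSet_Ioc, hne] with s hs hs1
    exact norm_integrand_le ha4 hab hx0 hx1 ⟨hs.1, lt_of_le_of_ne hs.2 hs1⟩
  calc ‖∫ s in Ioc (0:ℝ) 1, (s:ℂ)^(b-1) * (1-(s:ℂ))^(a-1) * ((1-x*s:ℝ):ℂ)^(-a)‖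
      ≤ ∫ s in Ioc (0:ℝ) 1, Hd x s := norm_integral_le_of_norm_le hint hae
    _ ≤ 11 + 2 * Real.log (1/(1-x)) := hbound

end BK

set_option maxHeartbeats 1000000 in
theorem stmt1 :
    ∃ C : ℝ, 0 < C ∧
      ∀ l : ℂ, 0 < l.im → ∀ t ∈ Set.Ioc (0 : ℝ) (1 / 2),
        ‖bfun 1 0 l t‖ ≤ C * Real.log (1 / t) := by
  refine ⟨24, by norm_num, ?_⟩
  intro l hl t ht
  obtain ⟨ht0, ht2⟩ := ht
  -- cosh facts
  have hchpos : 0 < Real.cosh t := by positivity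
  have hch : 1 < Real.cosh t := by
    rw [Real.one_lt_cosh]
    exact ne_of_gt ht0
  have hcosh_le : Real.cosh t ≤ Real.cosh (1/2) := by
    rw [Real.cosh_le_cosh]
    rw [abs_of_pos ht0, abs_of_pos (by norm_num : (0:ℝ) < 1/2)]
    exact ht2
  have hexphalf : Real.exp (1/2) < 1.65 := by
    have h1 : Real.exp (1/2) ^ 2 = Real.exp 1 := by
      rw [sq, ← Real.exp_add]; norm_num
    nlinarith [Real.exp_one_lt_d9, Real.exp_pos (1/2:ℝ)]
  have hcoshhalf : Real.cosh (1/2) ^ 2 < 2 := by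
    have h2 : Real.exp (-(1/2:ℝ)) < 1 := Real.exp_lt_one_iff.mpr (by norm_num)
    have h3 : Real.cosh (1/2) < 1.33 := by
      rw [Real.cosh_eq]
      have := Real.exp_pos (-(1/2:ℝ))
      norm_num
      nlinarith
    nlinarith [Real.cosh_pos (x := (1/2:ℝ))]
  have hchsq : Real.cosh t ^ 2 < 2 := by nlinarith
  set x : ℝ := ((Real.cosh t)^2)⁻¹ with hxdef
  have hx0 : 0 < x := by rw [hxdef]; positivity
  have hx1 : x < 1 := by
    rw [hxdef]
    rw [inv_lt_one_iff₀]
    right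
    nlinarith
  have hx2 : 1/2 < x := by
    rw [hxdef, show (1/2 : ℝ) = 2⁻¹ by norm_num]
    exact inv_strictAnti₀ (by positivity) hchsq
  -- parameters
  set a : ℂ := ((1/2:ℂ) - Complex.I*l)/2 with hadef
  set b : ℂ := (3/4:ℂ) - Complex.I*l/2 with hbdef
  have hare : a.re = 1/4 + l.im/2 := by
    rw [hadef]
    simp [Complex.div_re, Complex.sub_re, Complex.mul_re, Complex.I_re, Complex.I_im,
      Complex.normSq]
    ring
  have hbre : b.re = 3/4 + l.im/2 := by
    rw [hbdef]
    simp [Complex.div_re, Complex.sub_re, Complex.mul_re, Complex.I_re, Complex.I_im,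
      Complex.normSq]
    ring
  have ha : 0 < a.re := by rw [hare]; linarith
  have hb : 0 < b.re := by rw [hbre]; linarith
  have ha4 : 1/4 ≤ a.re := by rw [hare]; linarith
  have habrel : b.re = a.re + 1/2 := by rw [hare, hbre]; ring
  -- rewrite bfun
  have hrhoC : ((rho 1 0 : ℝ) : ℂ) = (1/2 : ℂ) := by
    have : rho 1 0 = 1/2 := by simp [rho]
    rw [this]
    norm_num
  have key : bfun 1 0 l t =
      ((2:ℂ)^(-(1/2:ℂ)-1-Complex.I*l) *
        ((2*Real.cosh t:ℝ):ℂ)^(Complex.I*l - (1/2:ℂ))) *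
      (Complex.Gamma a * Complex.Gamma b / Complex.Gamma (a+b)
        * hyp a b (a+b) ((x:ℝ):ℂ)) := by
    simp only [bfun, Phi, hrhoC, Nat.cast_one, Nat.cast_zero]
    have e1 : ((1:ℂ)+2)/4 - Complex.I*l/2 = b := by rw [hbdef]; norm_num
    have e2 : ((1/2:ℂ) - Complex.I*l)/2 = a := by rw [hadef]
    have e3 : (1:ℂ) - Complex.I*l = a + b := by rw [hadef, hbdef]; ring
    have e4 : ((1:ℂ)+0+1)/2 = 1 := by norm_num
    have e5 : ((((Real.cosh t)^2 : ℝ)):ℂ)⁻¹ = ((x:ℝ):ℂ) := by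
      rw [hxdef]
      push_cast
      ring
    rw [e1, e2, e3, e4, e5, Complex.Gamma_one, one_mul]
    ring
  rw [key, norm_mul]
  -- integral bound
  have hrep := BK.rep a b ha hb hx0 hx1
  have hint := BK.norm_int_le a b ha4 habrel hx2 hx1
  rw [← hrep] at hint
  -- prefactor bound
  have hpre : ‖(2:ℂ)^(-(1/2:ℂ)-1-Complex.I*l) *
      ((2*Real.cosh t:ℝ):ℂ)^(Complex.I*l - (1/2:ℂ))‖ ≤ 1 := by
    rw [norm_mul]
    rw [show ((2:ℂ)^(-(1/2:ℂ)-1-Complex.I*l))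
        = (((2:ℝ):ℂ))^(-(1/2:ℂ)-1-Complex.I*l) by norm_num]
    rw [Complex.norm_cpow_eq_rpow_re_of_pos (by norm_num : (0:ℝ) < 2),
      Complex.norm_cpow_eq_rpow_re_of_pos (by positivity : (0:ℝ) < 2*Real.cosh t)]
    have er1 : (-(1/2:ℂ)-1-Complex.I*l).re = l.im - 3/2 := by
      simp [Complex.sub_re, Complex.mul_re, Complex.I_re, Complex.I_im]
      try ring
    have er2 : (Complex.I*l - (1/2:ℂ)).re = -l.im - 1/2 := by
      simp [Complex.sub_re, Complex.mul_re, Complex.I_re, Complex.I_im]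
      try ring
    rw [er1, er2]
    have h2c : (2:ℝ) ≤ 2*Real.cosh t := by nlinarith
    have hsplit1 : (2:ℝ) ^ (l.im - 3/2) = (2:ℝ)^(l.im) * (2:ℝ)^(-(3/2):ℝ) := by
      rw [← Real.rpow_add (by norm_num)]
      congr 1
      try ring
    have hsplit2 : (2*Real.cosh t) ^ (-l.im - 1/2) =
        ((2*Real.cosh t)^(l.im))⁻¹ * (2*Real.cosh t)^(-(1/2):ℝ) := by
      rw [← Real.rpow_neg (by positivity), ← Real.rpow_add (by positivity)]
      congr 1
      try ring
    rw [hsplit1, hsplit2]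
    have hq1 : (2:ℝ)^(l.im) * ((2*Real.cosh t)^(l.im))⁻¹ ≤ 1 := by
      rw [← div_eq_mul_inv, div_le_one (Real.rpow_pos_of_pos (by positivity) _)]
      exact Real.rpow_le_rpow (by norm_num) h2c hl.le
    have hq2 : (2:ℝ)^(-(3/2):ℝ) ≤ 1 :=
      Real.rpow_le_one_of_one_le_of_nonpos (by norm_num) (by norm_num)
    have hq3 : (2*Real.cosh t)^(-(1/2):ℝ) ≤ 1 :=
      Real.rpow_le_one_of_one_le_of_nonpos (by linarith) (by norm_num)
    calc (2:ℝ)^(l.im) * (2:ℝ)^(-(3/2):ℝ) *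
          (((2*Real.cosh t)^(l.im))⁻¹ * (2*Real.cosh t)^(-(1/2):ℝ))
        = ((2:ℝ)^(l.im) * ((2*Real.cosh t)^(l.im))⁻¹) *
          ((2:ℝ)^(-(3/2):ℝ) * (2*Real.cosh t)^(-(1/2):ℝ)) := by ring
      _ ≤ 1 * (1 * 1) := by
          apply mul_le_mul hq1 _ (by positivity) (by norm_num)
          apply mul_le_mul hq2 hq3 (by positivity) (by norm_num)
      _ = 1 := by norm_num
  -- log estimates
  have h2t : (2:ℝ) ≤ 1/t := by
    rw [le_div_iff₀ ht0]; linarith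
  have hlogt : 0 < Real.log (1/t) := Real.log_pos (by linarith)
  have hlog2 : Real.log 2 ≤ Real.log (1/t) := Real.log_le_log (by norm_num) h2t
  have hsinh : t < Real.sinh t := Real.self_lt_sinh_iff.mpr ht0
  have hsp : 0 < Real.sinh t := Real.sinh_pos_iff.mpr ht0
  have h1xval : 1 - x = (Real.sinh t)^2 / (Real.cosh t)^2 := by
    have hc2 : (Real.cosh t)^2 = (Real.sinh t)^2 + 1 := Real.cosh_sq t
    rw [hxdef]
    field_simp
    linarith
  have h1xpos : 0 < 1 - x := by linarith
  have h1xlb : t^2/4 ≤ 1 - x := by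
    rw [h1xval]
    have hn1 : t^2 ≤ Real.sinh t^2 := by nlinarith
    have hd1 : Real.cosh t^2 ≤ 4 := by nlinarith
    calc t^2/4 ≤ Real.sinh t^2/4 := by gcongr
      _ ≤ Real.sinh t^2/Real.cosh t^2 := by
          apply div_le_div_of_nonneg_left (by positivity) (by positivity) hd1
  have hlogx : Real.log (1/(1-x)) ≤ 4 * Real.log (1/t) := by
    have hstep : 1/(1-x) ≤ 4/t^2 := by
      rw [div_le_div_iff₀ h1xpos (by positivity)]
      nlinarith
    have hlog4 : Real.log (4/t^2) = 2*Real.log 2 + 2*Real.log (1/t) := by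
      rw [Real.log_div (by norm_num) (by positivity),
        show (4:ℝ) = 2^2 by norm_num, Real.log_pow, Real.log_pow,
        one_div, Real.log_inv]
      push_cast
      ring
    calc Real.log (1/(1-x)) ≤ Real.log (4/t^2) :=
          Real.log_le_log (by positivity) hstep
      _ = 2*Real.log 2 + 2*Real.log (1/t) := hlog4
      _ ≤ 4 * Real.log (1/t) := by linarith
  have hlogxnn : 0 ≤ Real.log (1/(1-x)) := by
    apply Real.log_nonneg
    rw [le_div_iff₀ h1xpos]
    linarith [hx0]
  calc ‖(2:ℂ)^(-(1/2:ℂ)-1-Complex.I*l) *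
        ((2*Real.cosh t:ℝ):ℂ)^(Complex.I*l - (1/2:ℂ))‖ *
        ‖Complex.Gamma a * Complex.Gamma b / Complex.Gamma (a+b)
          * hyp a b (a+b) ((x:ℝ):ℂ)‖
      ≤ 1 * (11 + 2 * Real.log (1/(1-x))) := by
        apply mul_le_mul hpre hint (norm_nonneg _) (by norm_num)
    _ = 11 + 2 * Real.log (1/(1-x)) := by ring
    _ ≤ 11 + 8 * Real.log (1/t) := by linarith
    _ ≤ 24 * Real.log (1/t) := by
        nlinarith [Real.log_two_gt_d9]


end
end

section
/- Assume m₁ = 1 and m₂ = 0 (so that ρ = 1/2). Then for every λ ∈ ℂ with Im λ > 0 and every t > 0, b_λ(t) = 2^{−2ρ−1} ∫₀^1 s^{(m₁+2)/4 − iλ/2 − 1} (1−s)^{(−m₁+2)/4 − iλ/2 − 1} (cosh²t − s)^{−(ρ−iλ)/2} ds, the integral being absolutely convergent. -/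
open Complex MeasureTheory Set Filter

set_option maxHeartbeats 1000000

noncomputable section

lemma summable_master (a : ℂ) {r : ℝ} (h0 : 0 < r) (h1 : r < 1) :
    Summable (fun n : ℕ => ((n : ℝ) + 1) * (‖(ascPochhammer ℂ n).eval a‖ / n.factorial) * r ^ n) := by
  set t : ℕ → ℝ := fun n => ((n : ℝ) + 1) * (‖(ascPochhammer ℂ n).eval a‖ / n.factorial) * r ^ n with ht
  have htnn : ∀ n, 0 ≤ t n := by
    intro n
    positivity
  apply summable_of_ratio_norm_eventually_le (r := (1 + r) / 2) (by linarith)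
  -- eventual bound
  have hlr : 1 < (1 + r) / 2 / r := by
    rw [lt_div_iff₀ h0]; linarith
  have htend : Tendsto (fun n : ℕ => ((n : ℝ) + 2) * (‖a‖ + n) / (((n : ℝ) + 1) ^ 2)) atTop
      (nhds 1) := by
    have h2 : Tendsto (fun n : ℕ => (1 : ℝ) / ((n : ℝ) + 1)) atTop (nhds 0) :=
      tendsto_one_div_add_atTop_nhds_zero_nat
    have key : ∀ n : ℕ, ((n : ℝ) + 2) * (‖a‖ + n) / (((n : ℝ) + 1) ^ 2) =
        (1 + 1 / ((n : ℝ) + 1)) * (1 + (‖a‖ - 1) * (1 / ((n : ℝ) + 1))) := by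
      intro n
      have : ((n : ℝ) + 1) ≠ 0 := by positivity
      field_simp
      ring
    simp_rw [key]
    have := ((tendsto_const_nhds (x := (1:ℝ))).add h2).mul
      ((tendsto_const_nhds (x := (1:ℝ))).add ((tendsto_const_nhds (x := ‖a‖ - 1)).mul h2))
    simpa using this
  have hev : ∀ᶠ n : ℕ in atTop, ((n : ℝ) + 2) * (‖a‖ + n) / (((n : ℝ) + 1) ^ 2) ≤ (1 + r) / 2 / r :=
    htend.eventually (eventually_le_nhds hlr)
  filter_upwards [hev] with n hn
  rw [Real.norm_of_nonneg (htnn _), Real.norm_of_nonneg (htnn _)]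
  have hfact : (((n + 1).factorial : ℝ)) = (n.factorial : ℝ) * (n + 1) := by
    rw [Nat.factorial_succ]; push_cast; ring
  have hpoch : ‖(ascPochhammer ℂ (n + 1)).eval a‖ ≤ ‖(ascPochhammer ℂ n).eval a‖ * (‖a‖ + n) := by
    rw [ascPochhammer_succ_eval, norm_mul]
    gcongr
    calc ‖a + (n : ℂ)‖ ≤ ‖a‖ + ‖(n : ℂ)‖ := norm_add_le _ _
      _ = ‖a‖ + n := by simp
  have hfn : (0:ℝ) < n.factorial := by positivity
  have h1n : (0:ℝ) < (n:ℝ) + 1 := by positivity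
  calc t (n + 1) = ((n : ℝ) + 2) * (‖(ascPochhammer ℂ (n+1)).eval a‖ / ((n+1).factorial)) * (r ^ n * r) := by
        simp only [ht]; push_cast; ring
    _ ≤ ((n : ℝ) + 2) * ((‖(ascPochhammer ℂ n).eval a‖ * (‖a‖ + n)) / ((n.factorial : ℝ) * (n + 1))) * (r ^ n * r) := by
        rw [hfact]
        gcongr
    _ = (((n : ℝ) + 2) * (‖a‖ + n) / (((n : ℝ) + 1) ^ 2)) * r * t n := by
        simp only [ht]
        field_simp
    _ ≤ ((1 + r) / 2 / r) * r * t n := by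
        gcongr
    _ = (1 + r) / 2 * t n := by field_simp

lemma norm_term (a : ℂ) (y : ℝ) (n : ℕ) :
    ‖(ascPochhammer ℂ n).eval a / (n.factorial : ℂ) * (y : ℂ) ^ n‖ =
      ‖(ascPochhammer ℂ n).eval a‖ / n.factorial * |y| ^ n := by
  rw [norm_mul, norm_div, norm_pow]
  simp

lemma summable_term (a : ℂ) {y : ℝ} (hy : |y| < 1) :
    Summable (fun n : ℕ => (ascPochhammer ℂ n).eval a / (n.factorial : ℂ) * (y : ℂ) ^ n) := by
  have h0 : (0:ℝ) < (|y| + 1) / 2 := by positivity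
  have h1 : (|y| + 1) / 2 < 1 := by linarith
  refine Summable.of_norm_bounded (summable_master a h0 h1) fun n => ?_
  rw [norm_term]
  have hy' : |y| ≤ (|y| + 1) / 2 := by linarith
  have h2 : ‖(ascPochhammer ℂ n).eval a‖ / n.factorial * |y| ^ n ≤
      ‖(ascPochhammer ℂ n).eval a‖ / n.factorial * ((|y| + 1) / 2) ^ n := by
    gcongr
  refine h2.trans ?_
  have h3 : (1:ℝ) ≤ (n:ℝ) + 1 := by
    have := Nat.cast_nonneg (α := ℝ) n; linarith
  have h4 : (0:ℝ) ≤ ‖(ascPochhammer ℂ n).eval a‖ / n.factorial * ((|y| + 1) / 2) ^ n := by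
    positivity
  rw [mul_assoc]
  exact le_mul_of_one_le_left h4 h3

lemma norm_c (a : ℂ) (n : ℕ) :
    ‖(ascPochhammer ℂ n).eval a / (n.factorial : ℂ)‖ = ‖(ascPochhammer ℂ n).eval a‖ / n.factorial := by
  rw [norm_div]
  simp

lemma c_succ_mul (a : ℂ) (n : ℕ) :
    (ascPochhammer ℂ (n+1)).eval a / ((n+1).factorial : ℂ) * ((n : ℂ) + 1) =
      (ascPochhammer ℂ n).eval a / (n.factorial : ℂ) * (a + n) := by
  have h1 : ((n.factorial : ℂ)) ≠ 0 := Nat.cast_ne_zero.2 n.factorial_ne_zero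
  have h2 : ((n : ℂ) + 1) ≠ 0 := Nat.cast_add_one_ne_zero n
  rw [ascPochhammer_succ_eval, Nat.factorial_succ]
  push_cast
  field_simp

lemma binomial_tsum (a : ℂ) {y : ℝ} (h0 : 0 ≤ y) (h1 : y < 1) :
    ∑' n : ℕ, (ascPochhammer ℂ n).eval a / (n.factorial : ℂ) * (y : ℂ) ^ n
      = ((1 - y : ℝ) : ℂ) ^ (-a) := by
  set c : ℕ → ℂ := fun n => (ascPochhammer ℂ n).eval a / (n.factorial : ℂ) with hc
  have hc0 : c 0 = 1 := by simp [hc]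
  have key_c : ∀ n : ℕ, c (n+1) * ((n:ℂ)+1) = c n * (a + n) := by
    intro n
    simp only [hc]
    exact c_succ_mul a n
  rcases eq_or_lt_of_le h0 with h0' | h0'
  · rw [← h0']
    rw [tsum_eq_single 0 (by intro n hn; simp [zero_pow hn])]
    simp [hc0]
  set r : ℝ := (1 + y) / 2 with hr
  have hr0 : 0 < r := by positivity
  have hr1 : r < 1 := by rw [hr]; linarith
  have hyr : y < r := by rw [hr]; linarith
  set g : ℕ → ℝ → ℂ := fun n z => c n * (z : ℂ) ^ n with hg
  set g' : ℕ → ℝ → ℂ := fun n z => c n * ((n : ℂ) * (z : ℂ) ^ (n - 1)) with hg'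
  set u : ℕ → ℝ := fun n => ‖c n‖ * ((n : ℝ) * r ^ (n - 1)) with hu
  have hsumu : Summable u := by
    refine Summable.of_nonneg_of_le (fun n => by positivity) (fun n => ?_)
      ((summable_master a hr0 hr1).mul_left (1 / r))
    simp only [hu, hc, norm_c]
    set K : ℝ := ‖(ascPochhammer ℂ n).eval a‖ / n.factorial with hK
    have hKnn : 0 ≤ K := by positivity
    cases n with
    | zero => norm_num; positivity
    | succ m =>
      rw [Nat.add_sub_cancel]
      have hrpow : 1/r * ((((m+1:ℕ):ℝ)+1) * K * r^(m+1)) = (((m:ℝ))+2) * K * r^m := by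
        field_simp
        push_cast
        ring
      rw [hrpow]
      push_cast
      nlinarith [mul_nonneg hKnn (pow_nonneg hr0.le m)]
  have hderiv : ∀ (n : ℕ) (z : ℝ), z ∈ Ioo (-r) r → HasDerivAt (g n) (g' n z) z := by
    intro n z _
    have h1 : HasDerivAt (fun w : ℂ => w ^ n) ((n : ℂ) * (z : ℂ) ^ (n - 1)) (z : ℂ) :=
      hasDerivAt_pow n _
    exact (h1.comp_ofReal).const_mul (c n)
  have hbound : ∀ (n : ℕ) (z : ℝ), z ∈ Ioo (-r) r → ‖g' n z‖ ≤ u n := by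
    intro n z hz
    have hzr : |z| ≤ r := by rw [abs_le]; exact ⟨hz.1.le, hz.2.le⟩
    simp only [hg', hu, norm_mul, Complex.norm_natCast, norm_pow, Complex.norm_real, Real.norm_eq_abs]
    gcongr <;> first | exact abs_nonneg z | exact hzr
  have h0mem : (0:ℝ) ∈ Ioo (-r) r := ⟨by linarith, hr0⟩
  have hg0 : Summable fun n => g n 0 := summable_term a (y := 0) (by simp)
  set f : ℝ → ℂ := fun z => ∑' n, g n z with hf
  have hfder : ∀ z ∈ Ioo (-r) r, HasDerivAt f (∑' n, g' n z) z := fun z hz =>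
    hasDerivAt_tsum_of_isPreconnected hsumu isOpen_Ioo (convex_Ioo _ _).isPreconnected
      hderiv hbound h0mem hg0 hz
  have key : ∀ z : ℝ, z ∈ Ioo (-r) r → ((1:ℂ) - z) * (∑' n, g' n z) = a * f z := by
    intro z hz
    have habs : |z| < r := abs_lt.2 ⟨hz.1, hz.2⟩
    have hs : Summable (fun n => g' n z) :=
      Summable.of_norm_bounded hsumu fun n => hbound n z hz
    have term_eq : ∀ n : ℕ, g' (n+1) z = c n * (a + n) * (z:ℂ) ^ n := by
      intro n
      show c (n+1) * ((((n+1):ℕ):ℂ) * (z:ℂ) ^ (n + 1 - 1)) = c n * (a + n) * (z:ℂ) ^ n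
      rw [Nat.add_sub_cancel]
      push_cast
      calc c (n+1) * (((n:ℂ)+1) * (z:ℂ)^n) = (c (n+1) * ((n:ℂ)+1)) * (z:ℂ)^n := by ring
        _ = (c n * (a + n)) * (z:ℂ)^n := by rw [key_c n]
        _ = c n * (a + (n:ℂ)) * (z:ℂ)^n := by ring
    have e1 : (∑' n, g' n z) = ∑' n, c n * (a + (n:ℂ)) * (z:ℂ) ^ n := by
      rw [hs.tsum_eq_zero_add]
      have h00 : g' 0 z = 0 := by simp [hg']
      rw [h00, zero_add]
      exact tsum_congr term_eq
    have term_eq2 : ∀ n : ℕ, (z:ℂ) * g' n z = c n * (n:ℂ) * (z:ℂ) ^ n := by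
      intro n
      cases n with
      | zero => show (z:ℂ) * g' 0 z = _; simp [hg']
      | succ m =>
        show (z:ℂ) * (c (m+1) * ((((m+1):ℕ):ℂ) * (z:ℂ) ^ (m + 1 - 1))) = _
        rw [Nat.add_sub_cancel]
        push_cast
        ring
    have e2 : (z:ℂ) * (∑' n, g' n z) = ∑' n, c n * (n:ℂ) * (z:ℂ)^n := by
      rw [← tsum_mul_left]
      exact tsum_congr term_eq2
    have hsum1 : Summable (fun n => c n * (a + (n:ℂ)) * (z:ℂ) ^ n) :=
      ((summable_nat_add_iff 1).2 hs).congr term_eq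
    have hsum2 : Summable (fun n => c n * (n:ℂ) * (z:ℂ) ^ n) :=
      (hs.mul_left (z:ℂ)).congr term_eq2
    have e3 : a * f z = ∑' n, a * g n z := (tsum_mul_left (a := a) (f := fun n => g n z)).symm
    calc ((1:ℂ) - z) * (∑' n, g' n z)
        = (∑' n, g' n z) - (z:ℂ) * (∑' n, g' n z) := by ring
      _ = (∑' n, c n * (a + (n:ℂ)) * (z:ℂ)^n) - (∑' n, c n * (n:ℂ) * (z:ℂ)^n) := by
          rw [e2, e1]
      _ = ∑' n, (c n * (a + (n:ℂ)) * (z:ℂ)^n - c n * (n:ℂ) * (z:ℂ)^n) :=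
          (hsum1.tsum_sub hsum2).symm
      _ = ∑' n, a * g n z := tsum_congr fun n => by
          show _ = a * (c n * (z:ℂ)^n); ring
      _ = a * f z := e3.symm
  set h : ℝ → ℂ := fun z => ((1:ℂ) - z) ^ a * f z with hh
  have hhd : ∀ z ∈ Ioo (-r) r, HasDerivAt h 0 z := by
    intro z hz
    have hz1 : (0:ℝ) < 1 - z := by have := hz.2; linarith
    have hb1 : HasDerivAt (fun z : ℝ => (1:ℂ) - (z:ℂ)) (-1) z := by
      have : HasDerivAt (fun w : ℂ => 1 - w) (-1) (z:ℂ) := by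
        simpa using (hasDerivAt_id (z:ℂ)).const_sub 1
      exact this.comp_ofReal
    have hslit : ((1:ℂ) - (z:ℂ)) ∈ Complex.slitPlane := by
      rw [Complex.mem_slitPlane_iff]
      left
      simp only [sub_re, one_re, ofReal_re]
      linarith
    have hb2c : HasDerivAt (fun w : ℂ => (1 - w) ^ a)
        (a * ((1:ℂ) - (z:ℂ)) ^ (a - 1) * (-1)) (z:ℂ) :=
      HasDerivAt.cpow_const (by simpa using (hasDerivAt_id (z:ℂ)).const_sub 1) hslit
    have hb2 : HasDerivAt (fun z : ℝ => ((1:ℂ) - (z:ℂ)) ^ a)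
        (a * ((1:ℂ) - (z:ℂ)) ^ (a - 1) * (-1)) z := hb2c.comp_ofReal
    have hd := hb2.mul (hfder z hz)
    refine HasDerivAt.congr_deriv hd ?_
    symm
    have hne : ((1:ℂ) - (z:ℂ)) ≠ 0 := by
      intro hcon
      have := congrArg Complex.re hcon
      simp only [sub_re, one_re, ofReal_re, zero_re] at this
      linarith
    have hpow : ((1:ℂ) - (z:ℂ)) ^ a = ((1:ℂ) - (z:ℂ)) ^ (a - 1) * ((1:ℂ) - (z:ℂ)) := by
      conv_lhs => rw [show a = (a - 1) + 1 by ring]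
      rw [Complex.cpow_add _ _ hne, Complex.cpow_one]
    rw [hpow]
    have hk := key z hz
    calc (0:ℂ) = ((1:ℂ) - (z:ℂ)) ^ (a-1) * ((-(a * f z)) + ((1:ℂ) - z) * (∑' n, g' n z)) := by
          rw [hk]; ring
      _ = a * ((1:ℂ)-(z:ℂ)) ^ (a-1) * (-1) * f z
            + ((1:ℂ)-(z:ℂ)) ^ (a-1) * ((1:ℂ)-(z:ℂ)) * (∑' n, g' n z) := by ring
  have hconst := constant_of_derivWithin_zero (a := 0) (b := y) (f := h) ?_ ?_ y ⟨h0, le_refl y⟩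
  · have hfy : h y = h 0 := hconst
    have hf0 : f 0 = 1 := by
      have : (fun n => g n 0) = fun n : ℕ => c n * ((0:ℝ):ℂ) ^ n := rfl
      show (∑' n, g n 0) = 1
      rw [tsum_eq_single 0 (by intro n hn; show c n * ((0:ℝ):ℂ) ^ n = 0; simp [zero_pow hn])]
      show c 0 * ((0:ℝ):ℂ) ^ 0 = 1
      simp [hc0]
    have hh0 : h 0 = 1 := by
      show ((1:ℂ) - ((0:ℝ):ℂ)) ^ a * f 0 = 1
      rw [hf0]
      norm_num
    rw [hh0] at hfy
    have hne : ((1:ℂ) - (y:ℂ)) ≠ 0 := by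
      intro hcon
      have := congrArg Complex.re hcon
      simp only [sub_re, one_re, ofReal_re, zero_re] at this
      linarith
    have hfy' : ((1:ℂ) - (y:ℂ)) ^ a * f y = 1 := hfy
    have hfyv : f y = (((1:ℂ) - (y:ℂ)) ^ a)⁻¹ :=
      eq_inv_of_mul_eq_one_left (by rw [mul_comm]; exact hfy')
    show f y = _
    rw [hfyv, ← Complex.cpow_neg]
    congr 1
    push_cast
    ring
  · intro z hz
    have hzm : z ∈ Ioo (-r) r := ⟨by have := hz.1; linarith, by have := hz.2; linarith⟩
    exact ((hhd z hzm).differentiableAt).differentiableWithinAt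
  · intro z hz
    have hzm : z ∈ Ioo (-r) r := ⟨by have := hz.1; linarith, by have := hz.2; linarith⟩
    exact ((hhd z hzm).hasDerivWithinAt).derivWithin (uniqueDiffOn_Icc h0' z ⟨hz.1, hz.2.le⟩)

lemma Gamma_poch (z : ℂ) (hz : 0 < z.re) (n : ℕ) :
    Complex.Gamma (z + n) = Complex.Gamma z * (ascPochhammer ℂ n).eval z := by
  induction n with
  | zero => simp
  | succ m ih =>
    have hne : z + (m : ℂ) ≠ 0 := by
      intro hcon
      have := congrArg Complex.re hcon
      simp only [add_re, natCast_re, zero_re] at this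
      have hm : (0:ℝ) ≤ (m:ℝ) := Nat.cast_nonneg m
      linarith
    have hstep : z + ((m + 1 : ℕ) : ℂ) = (z + m) + 1 := by push_cast; ring
    rw [hstep, Complex.Gamma_add_one _ hne, ih, ascPochhammer_succ_eval]
    ring

lemma poch_ne_zero {z : ℂ} (hz : 0 < z.re) (n : ℕ) : (ascPochhammer ℂ n).eval z ≠ 0 := by
  have h1 : Complex.Gamma (z + n) ≠ 0 := by
    apply Complex.Gamma_ne_zero_of_re_pos
    simp only [add_re, natCast_re]
    have : (0:ℝ) ≤ (n:ℝ) := Nat.cast_nonneg n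
    linarith
  rw [Gamma_poch z hz n] at h1
  exact fun hcon => h1 (by rw [hcon, mul_zero])

lemma beta_integrable {u v : ℂ} (hu : 0 < u.re) (hv : 0 < v.re) :
    IntegrableOn (fun s : ℝ => (s : ℂ) ^ (u - 1) * ((1 : ℂ) - (s : ℂ)) ^ (v - 1)) (Ioo 0 1) := by
  have h := Complex.betaIntegral_convergent hu hv
  rw [intervalIntegrable_iff_integrableOn_Ioc_of_le zero_le_one] at h
  exact h.mono_set Ioo_subset_Ioc_self

lemma euler (a b b' : ℂ) (ha : 0 < a.re) (hb : 0 < b.re) (hb' : 0 < b'.re)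
    {x : ℝ} (hx0 : 0 < x) (hx1 : x < 1) :
    IntegrableOn (fun s : ℝ => (s:ℂ)^(b-1) * ((1-s:ℝ):ℂ)^(b'-1) * ((1-s*x:ℝ):ℂ)^(-a)) (Ioo 0 1) ∧
    (∫ s in Ioo (0:ℝ) 1, (s:ℂ)^(b-1) * ((1-s:ℝ):ℂ)^(b'-1) * ((1-s*x:ℝ):ℂ)^(-a))
      = Complex.Gamma b * Complex.Gamma b' / Complex.Gamma (b+b') *
        ∑' n : ℕ, (ascPochhammer ℂ n).eval a * (ascPochhammer ℂ n).eval b /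
          ((ascPochhammer ℂ n).eval (b+b') * (n.factorial : ℂ)) * (x:ℂ)^n := by
  simp only [Complex.ofReal_sub, Complex.ofReal_one, Complex.ofReal_mul]
  -- the third factor and its bound
  set φ : ℝ → ℂ := fun s => ((1:ℂ) - (s:ℂ)*(x:ℂ)) ^ (-a) with hφ
  have hpos : ∀ s ∈ Ioo (0:ℝ) 1, (0:ℝ) < 1 - s * x := by
    intro s hs
    nlinarith [hs.1, hs.2]
  have hcoe : ∀ s : ℝ, ((1:ℂ) - (s:ℂ)*(x:ℂ)) = (((1 - s*x : ℝ)) : ℂ) := by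
    intro s; push_cast; ring
  have hφbound : ∀ s ∈ Ioo (0:ℝ) 1, ‖φ s‖ ≤ (1-x) ^ (-a.re) := by
    intro s hs
    rw [hφ]
    simp only
    rw [hcoe s, Complex.norm_cpow_eq_rpow_re_of_pos (hpos s hs)]
    have h1x : (0:ℝ) < 1 - x := by linarith
    have hle : 1 - x ≤ 1 - s * x := by nlinarith [hs.1, hs.2]
    have hre : (-a).re ≤ 0 := by simp [Complex.neg_re]; linarith
    rw [show (-a).re = -a.re by simp]
    exact Real.rpow_le_rpow_of_nonpos h1x hle (by linarith)
  have hφcont : ContinuousOn φ (Ioo 0 1) := by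
    intro s hs
    have hbase : ((1:ℂ) - (s:ℂ)*(x:ℂ)) ∈ Complex.slitPlane := by
      rw [hcoe s]
      exact Complex.ofReal_mem_slitPlane.2 (hpos s hs)
    have hc1 : ContinuousAt (fun z : ℂ => z ^ (-a)) ((1:ℂ) - (s:ℂ)*(x:ℂ)) :=
      continuousAt_cpow_const hbase
    have hc2 : Continuous (fun s : ℝ => (1:ℂ) - (s:ℂ)*(x:ℂ)) :=
      continuous_const.sub (Complex.continuous_ofReal.mul continuous_const)
    exact (ContinuousAt.comp (x := s) (g := fun z : ℂ => z ^ (-a))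
      (f := fun s : ℝ => (1:ℂ) - (s:ℂ)*(x:ℂ)) hc1 hc2.continuousAt).continuousWithinAt
  have hφmeas : AEStronglyMeasurable φ (volume.restrict (Ioo (0:ℝ) 1)) :=
    (hφcont.aestronglyMeasurable measurableSet_Ioo)
  -- integrability of the full integrand
  have hInt : IntegrableOn
      (fun s : ℝ => (s:ℂ)^(b-1) * ((1:ℂ)-(s:ℂ))^(b'-1) * ((1:ℂ)-(s:ℂ)*(x:ℂ))^(-a)) (Ioo 0 1) := by
    have h1 : IntegrableOn (fun s : ℝ => φ s * ((s:ℂ)^(b-1) * ((1:ℂ)-(s:ℂ))^(b'-1))) (Ioo 0 1) := by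
      refine Integrable.bdd_mul (c := (1-x) ^ (-a.re)) (beta_integrable hb hb') hφmeas ?_
      rw [ae_restrict_iff' measurableSet_Ioo]
      filter_upwards with s hs
      exact hφbound s hs
    refine h1.congr_fun (fun s _ => by rw [hφ]; ring) measurableSet_Ioo
  refine ⟨hInt, ?_⟩
  -- term functions
  set T : ℕ → ℝ → ℂ := fun n s =>
    ((ascPochhammer ℂ n).eval a / (n.factorial : ℂ) * (x:ℂ)^n) *
      ((s:ℂ)^(b-1+n) * ((1:ℂ)-(s:ℂ))^(b'-1)) with hT
  have hbn : ∀ n : ℕ, (0:ℝ) < (b + n).re := by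
    intro n
    simp only [add_re, natCast_re]
    have : (0:ℝ) ≤ (n:ℝ) := Nat.cast_nonneg n
    linarith
  have hexp : ∀ n : ℕ, b + (n:ℂ) - 1 = b - 1 + n := by intro n; ring
  have hbeta_n : ∀ n : ℕ,
      IntegrableOn (fun s : ℝ => (s:ℂ)^(b-1+n) * ((1:ℂ)-(s:ℂ))^(b'-1)) (Ioo 0 1) := by
    intro n
    have h := beta_integrable (hbn n) hb'
    have he : (fun s : ℝ => (s:ℂ)^(b+(n:ℂ)-1) * ((1:ℂ)-(s:ℂ))^(b'-1))
        = (fun s : ℝ => (s:ℂ)^(b-1+n) * ((1:ℂ)-(s:ℂ))^(b'-1)) := by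
      funext s; rw [hexp n]
    rwa [he] at h
  have hTint : ∀ n : ℕ, IntegrableOn (T n) (Ioo 0 1) := fun n =>
    (hbeta_n n).const_mul ((ascPochhammer ℂ n).eval a / (n.factorial : ℂ) * (x:ℂ)^n)
  -- pointwise identity
  have hpt : ∀ s ∈ Ioo (0:ℝ) 1,
      (∑' n, T n s) = (s:ℂ)^(b-1) * ((1:ℂ)-(s:ℂ))^(b'-1) * ((1:ℂ)-(s:ℂ)*(x:ℂ))^(-a) := by
    intro s hs
    have hy0 : 0 ≤ s * x := by nlinarith [hs.1]
    have hy1 : s * x < 1 := by nlinarith [hs.1, hs.2]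
    have hbin := binomial_tsum a hy0 hy1
    have hsne : (s:ℂ) ≠ 0 := by
      simp only [ne_eq, ofReal_eq_zero]
      exact ne_of_gt hs.1
    calc (∑' n, T n s)
        = ∑' n, ((s:ℂ)^(b-1) * ((1:ℂ)-(s:ℂ))^(b'-1)) *
            ((ascPochhammer ℂ n).eval a / (n.factorial : ℂ) * (((s*x : ℝ)):ℂ)^n) := by
          refine tsum_congr fun n => ?_
          rw [hT]
          simp only
          rw [Complex.cpow_add _ _ hsne, Complex.cpow_natCast]
          push_cast
          ring
      _ = ((s:ℂ)^(b-1) * ((1:ℂ)-(s:ℂ))^(b'-1)) *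
            ∑' n, ((ascPochhammer ℂ n).eval a / (n.factorial : ℂ) * (((s*x : ℝ)):ℂ)^n) :=
          tsum_mul_left
      _ = _ := by
          rw [hbin]
          have : (((1 - s*x : ℝ)):ℂ) = ((1:ℂ)-(s:ℂ)*(x:ℂ)) := (hcoe s).symm
          rw [this]
  -- summability of the integrals of norms
  have hnorm_beta : ∀ (n : ℕ) (s : ℝ), s ∈ Ioo (0:ℝ) 1 →
      ‖(s:ℂ)^(b-1+n) * ((1:ℂ)-(s:ℂ))^(b'-1)‖ ≤ ‖(s:ℂ)^(b-1) * ((1:ℂ)-(s:ℂ))^(b'-1)‖ := by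
    intro n s hs
    rw [norm_mul, norm_mul]
    gcongr
    rw [Complex.norm_cpow_eq_rpow_re_of_pos hs.1, Complex.norm_cpow_eq_rpow_re_of_pos hs.1]
    apply Real.rpow_le_rpow_of_exponent_ge hs.1 hs.2.le
    simp only [add_re, sub_re, one_re, natCast_re]
    have : (0:ℝ) ≤ (n:ℝ) := Nat.cast_nonneg n
    linarith
  set K : ℝ := ∫ s in Ioo (0:ℝ) 1, ‖(s:ℂ)^(b-1) * ((1:ℂ)-(s:ℂ))^(b'-1)‖ with hK
  have hKnn : 0 ≤ K := by
    rw [hK]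
    positivity
  have hTnorm : ∀ n : ℕ, (∫ s in Ioo (0:ℝ) 1, ‖T n s‖)
      ≤ ‖(ascPochhammer ℂ n).eval a‖ / n.factorial * x^n * K := by
    intro n
    have heq : ∀ s : ℝ, ‖T n s‖ =
        (‖(ascPochhammer ℂ n).eval a‖ / n.factorial * x^n) *
          ‖(s:ℂ)^(b-1+n) * ((1:ℂ)-(s:ℂ))^(b'-1)‖ := by
      intro s
      rw [hT]
      simp only
      rw [norm_mul, norm_mul, norm_c, norm_pow]
      rw [Complex.norm_real, Real.norm_eq_abs, abs_of_pos hx0]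
    calc (∫ s in Ioo (0:ℝ) 1, ‖T n s‖)
        = (‖(ascPochhammer ℂ n).eval a‖ / n.factorial * x^n) *
            ∫ s in Ioo (0:ℝ) 1, ‖(s:ℂ)^(b-1+n) * ((1:ℂ)-(s:ℂ))^(b'-1)‖ := by
          simp_rw [heq]
          rw [integral_const_mul]
      _ ≤ (‖(ascPochhammer ℂ n).eval a‖ / n.factorial * x^n) * K := by
          gcongr
          rw [hK]
          refine setIntegral_mono_on ?_ ?_ measurableSet_Ioo (fun s hs => hnorm_beta n s hs)
          · exact (hbeta_n n).norm
          · exact (beta_integrable hb hb').norm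
  have hsummable : Summable (fun n => ∫ s in Ioo (0:ℝ) 1, ‖T n s‖) := by
    refine Summable.of_nonneg_of_le
      (fun n => setIntegral_nonneg measurableSet_Ioo (fun s _ => norm_nonneg _)) (fun n => ?_)
      ((summable_master a hx0 hx1).mul_right K : Summable
        (fun n : ℕ => (((n:ℝ)+1) * (‖(ascPochhammer ℂ n).eval a‖ / n.factorial) * x^n) * K))
    refine (hTnorm n).trans ?_
    have h1 : (1:ℝ) ≤ (n:ℝ) + 1 := by
      have : (0:ℝ) ≤ (n:ℝ) := Nat.cast_nonneg n
      linarith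
    have h2 : (0:ℝ) ≤ ‖(ascPochhammer ℂ n).eval a‖ / n.factorial * x^n * K := by positivity
    calc ‖(ascPochhammer ℂ n).eval a‖ / n.factorial * x^n * K
        ≤ ((n:ℝ)+1) * (‖(ascPochhammer ℂ n).eval a‖ / n.factorial * x^n * K) :=
          le_mul_of_one_le_left h2 h1
      _ = ((n:ℝ)+1) * (‖(ascPochhammer ℂ n).eval a‖ / n.factorial) * x^n * K := by ring
  -- interchange
  have hinter := MeasureTheory.integral_tsum_of_summable_integral_norm hTint hsummable
  have hLHS : (∫ s in Ioo (0:ℝ) 1, (s:ℂ)^(b-1) * ((1:ℂ)-(s:ℂ))^(b'-1) * ((1:ℂ)-(s:ℂ)*(x:ℂ))^(-a))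
      = ∑' n, ∫ s in Ioo (0:ℝ) 1, T n s := by
    rw [hinter]
    exact (setIntegral_congr_fun measurableSet_Ioo (fun s hs => (hpt s hs))).symm
  rw [hLHS]
  -- compute each integral
  have hTval : ∀ n : ℕ, (∫ s in Ioo (0:ℝ) 1, T n s)
      = ((ascPochhammer ℂ n).eval a / (n.factorial : ℂ) * (x:ℂ)^n) *
          Complex.betaIntegral (b + n) b' := by
    intro n
    rw [hT]
    simp only
    rw [MeasureTheory.integral_const_mul]
    congr 1
    rw [Complex.betaIntegral, intervalIntegral.integral_of_le zero_le_one,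
      MeasureTheory.integral_Ioc_eq_integral_Ioo]
    refine setIntegral_congr_fun measurableSet_Ioo (fun s hs => ?_)
    rw [hexp n]
  have hGammane : Complex.Gamma (b + b') ≠ 0 :=
    Complex.Gamma_ne_zero_of_re_pos (by simp only [add_re]; linarith)
  have hGammabne : Complex.Gamma b ≠ 0 := Complex.Gamma_ne_zero_of_re_pos hb
  have hbb' : 0 < (b + b').re := by simp only [add_re]; linarith
  have hbeta_val : ∀ n : ℕ, Complex.betaIntegral (b + n) b' =
      Complex.Gamma b * (ascPochhammer ℂ n).eval b * Complex.Gamma b' /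
        (Complex.Gamma (b + b') * (ascPochhammer ℂ n).eval (b + b')) := by
    intro n
    have h1 := Complex.Gamma_mul_Gamma_eq_betaIntegral (hbn n) hb'
    have h2 : Complex.Gamma (b + n + b') ≠ 0 := by
      apply Complex.Gamma_ne_zero_of_re_pos
      simp only [add_re, natCast_re]
      have : (0:ℝ) ≤ (n:ℝ) := Nat.cast_nonneg n
      linarith
    have h3 : Complex.betaIntegral (b + n) b'
        = Complex.Gamma (b + n) * Complex.Gamma b' / Complex.Gamma (b + n + b') := by
      rw [eq_div_iff h2]
      linear_combination h1.symm
    rw [h3, Gamma_poch b hb n]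
    have h4 : b + (n:ℂ) + b' = (b + b') + n := by ring
    rw [h4, Gamma_poch (b+b') hbb' n]
  have hpoch_ne : ∀ n : ℕ, (ascPochhammer ℂ n).eval (b + b') ≠ 0 :=
    fun n => poch_ne_zero hbb' n
  calc (∑' n, ∫ s in Ioo (0:ℝ) 1, T n s)
      = ∑' n : ℕ, (Complex.Gamma b * Complex.Gamma b' / Complex.Gamma (b+b')) *
          ((ascPochhammer ℂ n).eval a * (ascPochhammer ℂ n).eval b /
            ((ascPochhammer ℂ n).eval (b+b') * (n.factorial : ℂ)) * (x:ℂ)^n) := by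
        refine tsum_congr fun n => ?_
        rw [hTval n, hbeta_val n]
        have hfne : ((n.factorial : ℂ)) ≠ 0 := Nat.cast_ne_zero.2 n.factorial_ne_zero
        field_simp
    _ = _ := tsum_mul_left

theorem stmt16 (l : ℂ) (hl : 0 < l.im) (t : ℝ) (ht : 0 < t) :
    IntegrableOn
      (fun s : ℝ =>
        (s : ℂ) ^ (((1 : ℂ) + 2) / 4 - Complex.I * l / 2 - 1) *
          ((1 - s : ℝ) : ℂ) ^ (((-1 : ℂ) + 2) / 4 - Complex.I * l / 2 - 1) *
          (((Real.cosh t) ^ 2 - s : ℝ) : ℂ) ^ (-(((rho 1 0 : ℂ) - Complex.I * l) / 2)))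
      (Set.Ioo 0 1) ∧
    bfun 1 0 l t =
      (2 : ℂ) ^ (-2 * (rho 1 0 : ℂ) - 1) *
        ∫ s in Set.Ioo (0 : ℝ) 1,
          (s : ℂ) ^ (((1 : ℂ) + 2) / 4 - Complex.I * l / 2 - 1) *
            ((1 - s : ℝ) : ℂ) ^ (((-1 : ℂ) + 2) / 4 - Complex.I * l / 2 - 1) *
            (((Real.cosh t) ^ 2 - s : ℝ) : ℂ) ^ (-(((rho 1 0 : ℂ) - Complex.I * l) / 2)) := by
  have hch : 1 < Real.cosh t := Real.one_lt_cosh.2 (ne_of_gt ht)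
  have hchpos : 0 < Real.cosh t := by linarith
  set a : ℂ := ((1/2 : ℂ) - I*l)/2 with hadef
  set b : ℂ := (3:ℂ)/4 - I*l/2 with hbdef
  set x : ℝ := ((Real.cosh t)^2)⁻¹ with hxdef
  have hch2 : 1 < (Real.cosh t)^2 := by nlinarith
  have hch2pos : 0 < (Real.cosh t)^2 := by positivity
  have hx0 : 0 < x := by rw [hxdef]; positivity
  have hx1 : x < 1 := by rw [hxdef]; exact inv_lt_one_of_one_lt₀ hch2
  have hIlre : (I*l).re = -l.im := by simp
  have ha : 0 < a.re := by
    have : a.re = 1/4 + l.im/2 := by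
      rw [hadef]
      simp [Complex.div_re, Complex.normSq, Complex.mul_re, Complex.mul_im]
      ring
    rw [this]; linarith
  have hb : 0 < b.re := by
    have : b.re = 3/4 + l.im/2 := by
      rw [hbdef]
      simp [Complex.div_re, Complex.normSq, Complex.mul_re, Complex.mul_im]
      ring
    rw [this]; linarith
  obtain ⟨hint, hval⟩ := euler a b a ha hb ha hx0 hx1
  have hrhoC : ((rho 1 0 : ℝ) : ℂ) = 1/2 := by
    have : rho 1 0 = (1/2 : ℝ) := by norm_num [rho]
    rw [this]
    norm_num
  have he1 : ((1:ℂ) + 2) / 4 - Complex.I * l / 2 - 1 = b - 1 := by rw [hbdef]; norm_num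
  have he2 : ((-1:ℂ) + 2) / 4 - Complex.I * l / 2 - 1 = a - 1 := by rw [hadef]; ring_nf
  have he3 : -(((rho 1 0 : ℂ) - Complex.I * l) / 2) = -a := by rw [hrhoC, hadef]
  simp only [he1, he2, he3]
  set Cc : ℂ := (((Real.cosh t)^2 : ℝ):ℂ)^(-a) with hCcdef
  have hfac : ∀ s ∈ Ioo (0:ℝ) 1, (((Real.cosh t)^2 - s : ℝ):ℂ)^(-a)
      = Cc * ((1-s*x:ℝ):ℂ)^(-a) := by
    intro s hs
    have hreal : (Real.cosh t)^2 - s = (Real.cosh t)^2 * (1 - s*x) := by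
      rw [hxdef]
      field_simp
    have hnn : (0:ℝ) ≤ 1 - s*x := by nlinarith [hs.1, hs.2]
    rw [hCcdef, ← Complex.mul_cpow_ofReal_nonneg hch2pos.le hnn, ← Complex.ofReal_mul, ← hreal]
  have hEq : EqOn
      (fun s : ℝ => (s:ℂ)^(b-1) * ((1-s:ℝ):ℂ)^(a-1) * (((Real.cosh t)^2 - s : ℝ):ℂ)^(-a))
      (fun s : ℝ => Cc * ((s:ℂ)^(b-1) * ((1-s:ℝ):ℂ)^(a-1) * ((1-s*x:ℝ):ℂ)^(-a)))
      (Ioo 0 1) := by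
    intro s hs
    simp only
    rw [hfac s hs]
    ring
  constructor
  · have hII : IntegrableOn (fun s : ℝ =>
        Cc * ((s:ℂ)^(b-1) * ((1-s:ℝ):ℂ)^(a-1) * ((1-s*x:ℝ):ℂ)^(-a))) (Ioo 0 1) :=
      hint.const_mul Cc
    exact hII.congr_fun (fun s hs => (hEq hs).symm) measurableSet_Ioo
  · rw [setIntegral_congr_fun measurableSet_Ioo hEq, MeasureTheory.integral_const_mul, hval]
    -- algebra
    unfold bfun Phi
    rw [hrhoC]
    simp only [Nat.cast_one, Nat.cast_zero]
    have hg1 : ((1:ℂ) + 0 + 1) / 2 = 1 := by norm_num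
    rw [hg1, Complex.Gamma_one]
    have hba : b + a = 1 - I*l := by rw [hadef, hbdef]; ring
    rw [← hba]
    rw [show ((1:ℂ) + 2) / 4 - Complex.I * l / 2 = b from by rw [hbdef]; norm_num]
    rw [show ((1/2 : ℂ) - Complex.I * l) / 2 = a from by rw [hadef]]
    rw [show ((((Real.cosh t)^2 : ℝ)):ℂ)⁻¹ = ((x:ℝ):ℂ) from by
      rw [hxdef, Complex.ofReal_inv]]
    set w : ℂ := Complex.I * l - 1/2 with hwdef
    have hcne : ((Real.cosh t : ℝ):ℂ) ≠ 0 := by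
      simp only [ne_eq, ofReal_eq_zero]
      exact ne_of_gt hchpos
    have hsplit : ((2*Real.cosh t:ℝ):ℂ)^w = (2:ℂ)^w * ((Real.cosh t:ℝ):ℂ)^w := by
      have h1 := Complex.mul_cpow_ofReal_nonneg (a := 2) (b := Real.cosh t)
        (by norm_num) hchpos.le w
      calc ((2*Real.cosh t:ℝ):ℂ)^w = (((2:ℝ):ℂ) * ((Real.cosh t:ℝ):ℂ))^w := by push_cast; ring_nf
        _ = ((2:ℝ):ℂ)^w * ((Real.cosh t:ℝ):ℂ)^w := h1
        _ = (2:ℂ)^w * ((Real.cosh t:ℝ):ℂ)^w := by norm_num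
    have hCc2 : Cc = ((Real.cosh t:ℝ):ℂ)^w := by
      rw [hCcdef]
      calc (((Real.cosh t)^2:ℝ):ℂ)^(-a) = (((Real.cosh t:ℝ):ℂ) * ((Real.cosh t:ℝ):ℂ))^(-a) := by
            push_cast; ring_nf
        _ = ((Real.cosh t:ℝ):ℂ)^(-a) * ((Real.cosh t:ℝ):ℂ)^(-a) :=
            Complex.mul_cpow_ofReal_nonneg hchpos.le hchpos.le (-a)
        _ = ((Real.cosh t:ℝ):ℂ)^(-a + -a) := (Complex.cpow_add _ _ hcne).symm
        _ = ((Real.cosh t:ℝ):ℂ)^w := by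
            congr 1
            rw [hadef, hwdef]
            ring
    have h2p : (2:ℂ)^(-(1/2:ℂ) - 1 - Complex.I * l) * (2:ℂ)^w = (2:ℂ)^(-2*(1/2:ℂ)-1) := by
      rw [← Complex.cpow_add _ _ two_ne_zero]
      congr 1
      rw [hwdef]
      ring
    rw [hsplit, hCc2, ← h2p]
    unfold hyp
    ring

end
end
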